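/- arXiv:1009.4416 — 4 statements merged into one kernel-verified Lean document; each statement's English description precedes it below -/
import Mathlib

section
/- Let ν > 0, α > 0, U₀ ∈ ℝ, and for y > 0, t > 0 define u(y,t) := U₀[1 − (2/π)∫₀^∞ (sin(ξy)/ξ) E(ξ,t) dξ + (2α/π)∫₀^∞ (ξ sin(ξy)/(1+αξ²)) E(ξ,t) dξ], where E(ξ,t) := exp(−νξ²t/(1+αξ²)) and the integrals are improper integrals, i.e. limits of ∫₀^R as R → ∞. Then for every y > 0 and t > 0 the partial derivatives ∂u/∂t, ∂²u/∂y² and ∂³u/∂t∂y² exist and satisfy ∂u/∂t = ν ∂²u/∂y² + α ∂³u/∂t∂y². -/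
open MeasureTheory Filter Real

open Set

lemma cc_intD {α : ℝ} (hα : 0 < α) : IntegrableOn (fun ξ : ℝ => (1 + α * ξ ^ 2)⁻¹) (Ioi 0) := by
  have hcont : Continuous fun ξ : ℝ => (1 + α * ξ ^ 2)⁻¹ := by
    apply Continuous.inv₀ (by fun_prop)
    intro x; positivity
  refine Integrable.mono' ((integrable_inv_one_add_sq.const_mul (max 1 α⁻¹)).restrict)
    hcont.aestronglyMeasurable ?_
  filter_upwards with ξ
  have h1 : (0:ℝ) < 1 + ξ ^ 2 := by positivity
  have h2 : (0:ℝ) < 1 + α * ξ ^ 2 := by positivity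
  have hm1 : (1:ℝ) ≤ max 1 α⁻¹ := le_max_left _ _
  have key : (1 + ξ ^ 2) ≤ (max 1 α⁻¹) * (1 + α * ξ ^ 2) := by
    have h3 : ξ ^ 2 ≤ max 1 α⁻¹ * (α * ξ ^ 2) := by
      calc ξ ^ 2 = α⁻¹ * (α * ξ ^ 2) := by field_simp
      _ ≤ max 1 α⁻¹ * (α * ξ ^ 2) :=
        mul_le_mul_of_nonneg_right (le_max_right _ _) (by positivity)
    nlinarith
  rw [Real.norm_eq_abs, abs_of_pos (by positivity), mul_comm, ← div_eq_mul_inv,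
    inv_eq_one_div, div_le_div_iff₀ (by positivity) (by positivity)]
  nlinarith

lemma cc_intB {α b : ℝ} (hα : 0 < α) (hb : 0 < b) :
    IntegrableOn (fun u : ℝ => (b + α * u ^ 2)⁻¹) (Ioi 0) := by
  have hcont : Continuous fun u : ℝ => (b + α * u ^ 2)⁻¹ := by
    apply Continuous.inv₀ (by fun_prop)
    intro x; positivity
  refine Integrable.mono' ((cc_intD hα).const_mul (max 1 b⁻¹))
    hcont.aestronglyMeasurable ?_
  filter_upwards with u
  have h1 : (0:ℝ) < 1 + α * u ^ 2 := by positivity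
  have h2 : (0:ℝ) < b + α * u ^ 2 := by positivity
  have key : (1 + α * u ^ 2) ≤ (max 1 b⁻¹) * (b + α * u ^ 2) := by
    have h3 : (1:ℝ) ≤ max 1 b⁻¹ * b := by
      calc (1:ℝ) = b⁻¹ * b := by field_simp
      _ ≤ max 1 b⁻¹ * b := mul_le_mul_of_nonneg_right (le_max_right _ _) hb.le
    nlinarith [le_max_left (1:ℝ) b⁻¹, mul_nonneg hα.le (sq_nonneg u)]
  rw [Real.norm_eq_abs, abs_of_pos (by positivity), mul_comm, ← div_eq_mul_inv,
    inv_eq_one_div, div_le_div_iff₀ (by positivity) (by positivity)]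
  nlinarith

/-- Master integrability lemma on `Ioi 0` by comparison with `M/(1+αξ²)`. -/
lemma cc_int_of_le {α : ℝ} (hα : 0 < α) {f : ℝ → ℝ}
    (hm : AEStronglyMeasurable f (volume.restrict (Ioi 0))) {M : ℝ}
    (hb : ∀ ξ ∈ Ioi (0:ℝ), |f ξ| ≤ M * (1 + α * ξ ^ 2)⁻¹) :
    IntegrableOn f (Ioi 0) := by
  refine Integrable.mono' ((cc_intD hα).const_mul M) hm ?_
  rw [ae_restrict_iff' measurableSet_Ioi]
  filter_upwards with ξ hξ
  simpa [Real.norm_eq_abs] using hb ξ hξ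

noncomputable section CCaux

/-- exponential kernel -/
def Ew (ν α ξ t : ℝ) : ℝ := Real.exp (-(ν * ξ ^ 2 * t) / (1 + α * ξ ^ 2))
def cw (ν α t : ℝ) : ℝ := Real.exp (-(ν / α) * t)
def KK (ν α y t : ℝ) : ℝ :=
  ∫ ξ in Ioi (0:ℝ), Real.sin (ξ * y) / (ξ * (1 + α * ξ ^ 2)) * Ew ν α ξ t
def KT (ν α y t : ℝ) : ℝ :=
  ∫ ξ in Ioi (0:ℝ), -(ν * ξ) * Real.sin (ξ * y) / (1 + α * ξ ^ 2) ^ 2 * Ew ν α ξ t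
def AA (ν α y t : ℝ) : ℝ :=
  ∫ ξ in Ioi (0:ℝ), Real.cos (ξ * y) / (1 + α * ξ ^ 2) * Ew ν α ξ t
def PP (α y : ℝ) : ℝ := ∫ u in Ioi (0:ℝ), y * Real.cos u / (y ^ 2 + α * u ^ 2)
def PP' (α y : ℝ) : ℝ :=
  ∫ u in Ioi (0:ℝ), Real.cos u * (α * u ^ 2 - y ^ 2) / (y ^ 2 + α * u ^ 2) ^ 2
def QQ (ν α y t : ℝ) : ℝ :=
  ∫ ξ in Ioi (0:ℝ), Real.cos (ξ * y) / (1 + α * ξ ^ 2) * (Ew ν α ξ t - cw ν α t)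
def QY (ν α y t : ℝ) : ℝ :=
  ∫ ξ in Ioi (0:ℝ), -(ξ * Real.sin (ξ * y)) / (1 + α * ξ ^ 2) * (Ew ν α ξ t - cw ν α t)
def QYT (ν α y t : ℝ) : ℝ :=
  ∫ ξ in Ioi (0:ℝ), ν / α * (ξ * Real.sin (ξ * y)) *
    (α * ξ ^ 2 * (Ew ν α ξ t - cw ν α t) - cw ν α t) / (1 + α * ξ ^ 2) ^ 2

variable {ν α : ℝ}

lemma Dpos (hα : 0 < α) (ξ : ℝ) : (0:ℝ) < 1 + α * ξ ^ 2 := by positivity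

lemma Ew_pos (ν α ξ t : ℝ) : 0 < Ew ν α ξ t := Real.exp_pos _

lemma Ew_le_one (hν : 0 < ν) (hα : 0 < α) {t : ℝ} (ht : 0 ≤ t) (ξ : ℝ) :
    Ew ν α ξ t ≤ 1 := by
  rw [Ew, Real.exp_le_one_iff]
  have := Dpos hα ξ
  apply div_nonpos_of_nonpos_of_nonneg _ this.le
  have : 0 ≤ ν * ξ ^ 2 * t := by positivity
  linarith

lemma cw_pos (ν α t : ℝ) : 0 < cw ν α t := Real.exp_pos _

lemma cw_le_one (hν : 0 < ν) (hα : 0 < α) {t : ℝ} (ht : 0 ≤ t) : cw ν α t ≤ 1 := by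
  rw [cw, Real.exp_le_one_iff]
  have : 0 ≤ ν / α * t := by positivity
  linarith

lemma Ew_eq (hα : 0 < α) (ξ t : ℝ) :
    Ew ν α ξ t = cw ν α t * Real.exp (ν * t / (α * (1 + α * ξ ^ 2))) := by
  rw [Ew, cw, ← Real.exp_add]
  congr 1
  have h := (Dpos hα ξ).ne'
  field_simp
  ring

lemma Ew_sub_cw_nonneg (hν : 0 < ν) (hα : 0 < α) {t : ℝ} (ht : 0 ≤ t) (ξ : ℝ) :
    0 ≤ Ew ν α ξ t - cw ν α t := by
  rw [Ew_eq hα]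
  have h1 : (1:ℝ) ≤ Real.exp (ν * t / (α * (1 + α * ξ ^ 2))) := by
    rw [Real.one_le_exp_iff]
    have := Dpos hα ξ
    positivity
  nlinarith [cw_pos ν α t]

lemma exp_sub_one_le {x : ℝ} (hx : 0 ≤ x) : Real.exp x - 1 ≤ x * Real.exp x := by
  have h := Real.add_one_le_exp (-x)
  have he : 0 < Real.exp x := Real.exp_pos x
  have : (-x + 1) * Real.exp x ≤ Real.exp (-x) * Real.exp x :=
    mul_le_mul_of_nonneg_right h he.le
  rw [← Real.exp_add] at this
  simp at this
  nlinarith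

lemma Ew_sub_cw_le (hν : 0 < ν) (hα : 0 < α) {t : ℝ} (ht : 0 ≤ t) (ξ : ℝ) :
    Ew ν α ξ t - cw ν α t ≤ ν * t / α * (1 + α * ξ ^ 2)⁻¹ := by
  have hD := Dpos hα ξ
  set g : ℝ := ν * t / (α * (1 + α * ξ ^ 2)) with hg
  have hg0 : 0 ≤ g := by positivity
  have h1 : Real.exp g - 1 ≤ g * Real.exp g := exp_sub_one_le hg0
  have hgG : g ≤ ν / α * t := by
    rw [hg]
    have h2 : α ≤ α * (1 + α * ξ ^ 2) := by nlinarith [sq_nonneg (α * ξ), sq_nonneg ξ]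
    calc ν * t / (α * (1 + α * ξ ^ 2)) ≤ ν * t / α :=
          div_le_div_of_nonneg_left (by positivity) hα h2
    _ = ν / α * t := by ring
  have hce : cw ν α t * Real.exp g ≤ 1 := by
    rw [cw, ← Real.exp_add, Real.exp_le_one_iff]
    linarith
  have key : Ew ν α ξ t - cw ν α t = cw ν α t * (Real.exp g - 1) := by
    rw [Ew_eq hα]; ring
  rw [key]
  calc cw ν α t * (Real.exp g - 1) ≤ cw ν α t * (g * Real.exp g) :=
        mul_le_mul_of_nonneg_left h1 (cw_pos ν α t).le
  _ = g * (cw ν α t * Real.exp g) := by ring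
  _ ≤ g * 1 := mul_le_mul_of_nonneg_left hce hg0
  _ = ν * t / α * (1 + α * ξ ^ 2)⁻¹ := by
      rw [mul_one, hg]
      field_simp

end CCaux

section CClemmas

variable {ν α : ℝ}

lemma xi_le_D (hα : 0 < α) {ξ : ℝ} :
    ξ ≤ (2 * Real.sqrt α)⁻¹ * (1 + α * ξ ^ 2) := by
  have hs := Real.sq_sqrt hα.le
  have hsp := Real.sqrt_pos.mpr hα
  have h2 : 2 * Real.sqrt α * ξ ≤ 1 + α * ξ ^ 2 := by
    nlinarith [sq_nonneg (1 - Real.sqrt α * ξ)]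
  calc ξ = (2 * Real.sqrt α)⁻¹ * (2 * Real.sqrt α * ξ) := by field_simp
  _ ≤ (2 * Real.sqrt α)⁻¹ * (1 + α * ξ ^ 2) :=
      mul_le_mul_of_nonneg_left h2 (by positivity)

lemma contE (hα : 0 < α) (ν t : ℝ) : Continuous fun ξ : ℝ => Ew ν α ξ t := by
  unfold Ew
  exact Real.continuous_exp.comp ((by fun_prop : Continuous fun ξ : ℝ =>
    -(ν * ξ ^ 2 * t)).div (by fun_prop) fun ξ => (Dpos hα ξ).ne')

lemma contQfac (hα : 0 < α) (ν t : ℝ) :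
    Continuous fun ξ : ℝ => Ew ν α ξ t - cw ν α t :=
  (contE hα ν t).sub continuous_const


lemma int_K (hν : 0 < ν) (hα : 0 < α) (y : ℝ) {t : ℝ} (ht : 0 ≤ t) :
    IntegrableOn (fun ξ : ℝ => Real.sin (ξ * y) / (ξ * (1 + α * ξ ^ 2)) * Ew ν α ξ t)
      (Ioi 0) := by
  apply cc_int_of_le hα (M := |y|)
  · apply ContinuousOn.aestronglyMeasurable _ measurableSet_Ioi
    intro ξ hξ
    have hξ0 : (0:ℝ) < ξ := hξ
    have hne : ξ * (1 + α * ξ ^ 2) ≠ 0 := (mul_pos hξ0 (Dpos hα ξ)).ne'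
    apply ContinuousAt.continuousWithinAt
    have h1 : Continuous fun ξ : ℝ => Real.sin (ξ * y) := by fun_prop
    have h2 : Continuous fun ξ : ℝ => ξ * (1 + α * ξ ^ 2) := by fun_prop
    exact (h1.continuousAt.div h2.continuousAt hne).mul (contE hα ν t).continuousAt
  · intro ξ hξ
    have hξ0 : (0:ℝ) < ξ := hξ
    have hD := Dpos hα ξ
    have hE1 := Ew_le_one hν hα ht ξ
    have hEp := Ew_pos ν α ξ t
    have hsin : |Real.sin (ξ * y)| ≤ ξ * |y| := by
      calc |Real.sin (ξ * y)| ≤ |ξ * y| := Real.abs_sin_le_abs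
      _ = ξ * |y| := by rw [abs_mul, abs_of_pos hξ0]
    rw [abs_mul, abs_div, abs_of_pos (mul_pos hξ0 hD), abs_of_pos hEp]
    calc |Real.sin (ξ * y)| / (ξ * (1 + α * ξ ^ 2)) * Ew ν α ξ t
        ≤ ξ * |y| / (ξ * (1 + α * ξ ^ 2)) * 1 := by gcongr
    _ = |y| * (1 + α * ξ ^ 2)⁻¹ := by field_simp

lemma int_KT (hν : 0 < ν) (hα : 0 < α) (y : ℝ) {t : ℝ} (ht : 0 ≤ t) :
    IntegrableOn (fun ξ : ℝ => -(ν * ξ) * Real.sin (ξ * y) / (1 + α * ξ ^ 2) ^ 2 *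
      Ew ν α ξ t) (Ioi 0) := by
  apply cc_int_of_le hα (M := ν * (2 * Real.sqrt α)⁻¹)
  · refine Continuous.aestronglyMeasurable ?_ |>.restrict
    exact ((by fun_prop : Continuous fun ξ : ℝ => -(ν * ξ) * Real.sin (ξ * y)).div
      (by fun_prop) fun ξ => pow_ne_zero 2 (Dpos hα ξ).ne').mul (contE hα ν t)
  · intro ξ hξ
    have hξ0 : (0:ℝ) < ξ := hξ
    have hD := Dpos hα ξ
    have hE1 := Ew_le_one hν hα ht ξ
    have hEp := Ew_pos ν α ξ t
    have hxi := xi_le_D hα (ξ := ξ)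
    have hs : |Real.sin (ξ * y)| ≤ 1 := Real.abs_sin_le_one _
    have hsq := Real.sqrt_pos.mpr hα
    rw [abs_mul, abs_div, abs_of_pos hEp, abs_of_pos (pow_pos hD 2), abs_mul, abs_neg,
      abs_of_pos (mul_pos hν hξ0)]
    calc ν * ξ * |Real.sin (ξ * y)| / (1 + α * ξ ^ 2) ^ 2 * Ew ν α ξ t
        ≤ ν * ((2 * Real.sqrt α)⁻¹ * (1 + α * ξ ^ 2)) * 1 / (1 + α * ξ ^ 2) ^ 2 * 1 := by
          gcongr
    _ = ν * (2 * Real.sqrt α)⁻¹ * (1 + α * ξ ^ 2)⁻¹ := by field_simp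

lemma int_A (hν : 0 < ν) (hα : 0 < α) (y : ℝ) {t : ℝ} (ht : 0 ≤ t) :
    IntegrableOn (fun ξ : ℝ => Real.cos (ξ * y) / (1 + α * ξ ^ 2) * Ew ν α ξ t)
      (Ioi 0) := by
  apply cc_int_of_le hα (M := 1)
  · refine Continuous.aestronglyMeasurable ?_ |>.restrict
    exact ((Real.continuous_cos.comp (by fun_prop)).div (by fun_prop)
      fun ξ => (Dpos hα ξ).ne').mul (contE hα ν t)
  · intro ξ hξ
    have hD := Dpos hα ξ
    have hE1 := Ew_le_one hν hα ht ξ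
    have hEp := Ew_pos ν α ξ t
    rw [abs_mul, abs_div, abs_of_pos hD, abs_of_pos hEp, one_mul]
    calc |Real.cos (ξ * y)| / (1 + α * ξ ^ 2) * Ew ν α ξ t
        ≤ 1 / (1 + α * ξ ^ 2) * 1 := by gcongr; exact Real.abs_cos_le_one _
    _ = (1 + α * ξ ^ 2)⁻¹ := by rw [mul_one, one_div]

lemma int_P (hα : 0 < α) {y : ℝ} (hy : y ≠ 0) :
    IntegrableOn (fun u : ℝ => y * Real.cos u / (y ^ 2 + α * u ^ 2)) (Ioi 0) := by
  have hy2 : (0:ℝ) < y ^ 2 := by positivity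
  refine Integrable.mono' ((cc_intB hα hy2).const_mul |y|) ?_ ?_
  · refine Continuous.aestronglyMeasurable ?_ |>.restrict
    exact (by fun_prop : Continuous fun u : ℝ => y * Real.cos u).div (by fun_prop)
      fun u => (by positivity : (0:ℝ) < y ^ 2 + α * u ^ 2).ne'
  · filter_upwards with u
    have hW : (0:ℝ) < y ^ 2 + α * u ^ 2 := by positivity
    rw [Real.norm_eq_abs, abs_div, abs_of_pos hW, abs_mul]
    calc |y| * |Real.cos u| / (y ^ 2 + α * u ^ 2)
        ≤ |y| * 1 / (y ^ 2 + α * u ^ 2) := by gcongr; exact Real.abs_cos_le_one _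
    _ = |y| * (y ^ 2 + α * u ^ 2)⁻¹ := by rw [mul_one, div_eq_mul_inv]

lemma int_P' (hα : 0 < α) {y : ℝ} (hy : y ≠ 0) :
    IntegrableOn (fun u : ℝ => Real.cos u * (α * u ^ 2 - y ^ 2) / (y ^ 2 + α * u ^ 2) ^ 2)
      (Ioi 0) := by
  have hy2 : (0:ℝ) < y ^ 2 := by positivity
  refine Integrable.mono' ((cc_intB hα hy2).const_mul 1) ?_ ?_
  · refine Continuous.aestronglyMeasurable ?_ |>.restrict
    exact (by fun_prop : Continuous fun u : ℝ => Real.cos u * (α * u ^ 2 - y ^ 2)).div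
      (by fun_prop) fun u => pow_ne_zero 2 (by positivity : (0:ℝ) < y ^ 2 + α * u ^ 2).ne'
  · filter_upwards with u
    have hW : (0:ℝ) < y ^ 2 + α * u ^ 2 := by positivity
    have hnum : |Real.cos u * (α * u ^ 2 - y ^ 2)| ≤ y ^ 2 + α * u ^ 2 := by
      rw [abs_mul]
      calc |Real.cos u| * |α * u ^ 2 - y ^ 2| ≤ 1 * (y ^ 2 + α * u ^ 2) := by
            apply mul_le_mul (Real.abs_cos_le_one _) _ (abs_nonneg _) zero_le_one
            rw [abs_le]
            constructor <;> nlinarith [mul_nonneg hα.le (sq_nonneg u), sq_nonneg y]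
      _ = y ^ 2 + α * u ^ 2 := one_mul _
    rw [Real.norm_eq_abs, abs_div, abs_of_pos (pow_pos hW 2), one_mul]
    calc |Real.cos u * (α * u ^ 2 - y ^ 2)| / (y ^ 2 + α * u ^ 2) ^ 2
        ≤ (y ^ 2 + α * u ^ 2) / (y ^ 2 + α * u ^ 2) ^ 2 := by gcongr
    _ = (y ^ 2 + α * u ^ 2)⁻¹ := by field_simp

lemma int_Q (hν : 0 < ν) (hα : 0 < α) (y : ℝ) {t : ℝ} (ht : 0 ≤ t) :
    IntegrableOn (fun ξ : ℝ => Real.cos (ξ * y) / (1 + α * ξ ^ 2) *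
      (Ew ν α ξ t - cw ν α t)) (Ioi 0) := by
  apply cc_int_of_le hα (M := 1)
  · refine Continuous.aestronglyMeasurable ?_ |>.restrict
    exact ((Real.continuous_cos.comp (by fun_prop)).div (by fun_prop)
      fun ξ => (Dpos hα ξ).ne').mul (contQfac hα ν t)
  · intro ξ hξ
    have hD := Dpos hα ξ
    have h0 := Ew_sub_cw_nonneg hν hα ht ξ
    have h1 : Ew ν α ξ t - cw ν α t ≤ 1 := by
      have := Ew_le_one hν hα ht ξ
      have := cw_pos ν α t
      linarith
    rw [abs_mul, abs_div, abs_of_pos hD, abs_of_nonneg h0, one_mul]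
    calc |Real.cos (ξ * y)| / (1 + α * ξ ^ 2) * (Ew ν α ξ t - cw ν α t)
        ≤ 1 / (1 + α * ξ ^ 2) * 1 := by gcongr; exact Real.abs_cos_le_one _
    _ = (1 + α * ξ ^ 2)⁻¹ := by rw [mul_one, one_div]

lemma int_QY (hν : 0 < ν) (hα : 0 < α) (y : ℝ) {t : ℝ} (ht : 0 ≤ t) :
    IntegrableOn (fun ξ : ℝ => -(ξ * Real.sin (ξ * y)) / (1 + α * ξ ^ 2) *
      (Ew ν α ξ t - cw ν α t)) (Ioi 0) := by
  apply cc_int_of_le hα (M := (2 * Real.sqrt α)⁻¹ * (ν * t / α))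
  · refine Continuous.aestronglyMeasurable ?_ |>.restrict
    exact ((by fun_prop : Continuous fun ξ : ℝ => -(ξ * Real.sin (ξ * y))).div
      (by fun_prop) fun ξ => (Dpos hα ξ).ne').mul (contQfac hα ν t)
  · intro ξ hξ
    have hξ0 : (0:ℝ) < ξ := hξ
    have hD := Dpos hα ξ
    have h0 := Ew_sub_cw_nonneg hν hα ht ξ
    have h2 := Ew_sub_cw_le hν hα ht ξ
    have hsq := Real.sqrt_pos.mpr hα
    have hnum : |ξ * Real.sin (ξ * y)| ≤ (2 * Real.sqrt α)⁻¹ * (1 + α * ξ ^ 2) := by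
      rw [abs_mul, abs_of_pos hξ0]
      calc ξ * |Real.sin (ξ * y)| ≤ ξ * 1 :=
            mul_le_mul_of_nonneg_left (Real.abs_sin_le_one _) hξ0.le
      _ ≤ (2 * Real.sqrt α)⁻¹ * (1 + α * ξ ^ 2) := by rw [mul_one]; exact xi_le_D hα
    rw [abs_mul, abs_div, abs_neg, abs_of_pos hD, abs_of_nonneg h0]
    calc |ξ * Real.sin (ξ * y)| / (1 + α * ξ ^ 2) * (Ew ν α ξ t - cw ν α t)
        ≤ ((2 * Real.sqrt α)⁻¹ * (1 + α * ξ ^ 2)) / (1 + α * ξ ^ 2) *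
            (ν * t / α * (1 + α * ξ ^ 2)⁻¹) := by gcongr
    _ = (2 * Real.sqrt α)⁻¹ * (ν * t / α) * (1 + α * ξ ^ 2)⁻¹ := by field_simp

lemma int_QYT (hν : 0 < ν) (hα : 0 < α) (y : ℝ) {t : ℝ} (ht : 0 ≤ t) {T : ℝ}
    (hT : t ≤ T) :
    IntegrableOn (fun ξ : ℝ => ν / α * (ξ * Real.sin (ξ * y)) *
      (α * ξ ^ 2 * (Ew ν α ξ t - cw ν α t) - cw ν α t) / (1 + α * ξ ^ 2) ^ 2)
      (Ioi 0) := by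
  have hT0 : 0 ≤ T := ht.trans hT
  apply cc_int_of_le hα (M := ν / α * ((2 * Real.sqrt α)⁻¹ * (ν * T / α + 1)))
  · refine Continuous.aestronglyMeasurable ?_ |>.restrict
    refine Continuous.div ?_ (by fun_prop) fun ξ => pow_ne_zero 2 (Dpos hα ξ).ne'
    exact (continuous_const.mul (continuous_id.mul
      (Real.continuous_sin.comp (by fun_prop)))).mul
      (((by fun_prop : Continuous fun ξ : ℝ => α * ξ ^ 2).mul
        (contQfac hα ν t)).sub continuous_const)
  · intro ξ hξ
    have hξ0 : (0:ℝ) < ξ := hξ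
    have hD := Dpos hα ξ
    have h0 := Ew_sub_cw_nonneg hν hα ht ξ
    have h2 := Ew_sub_cw_le hν hα ht ξ
    have hc0 := cw_pos ν α t
    have hc1 := cw_le_one hν hα ht (α := α)
    have hsq := Real.sqrt_pos.mpr hα
    have hup : α * ξ ^ 2 * (Ew ν α ξ t - cw ν α t) ≤ ν * T / α := by
      have hle : α * ξ ^ 2 * (1 + α * ξ ^ 2)⁻¹ ≤ 1 := by
        rw [← div_eq_mul_inv, div_le_one hD]
        nlinarith [mul_nonneg hα.le (sq_nonneg ξ)]
      calc α * ξ ^ 2 * (Ew ν α ξ t - cw ν α t)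
          ≤ α * ξ ^ 2 * (ν * t / α * (1 + α * ξ ^ 2)⁻¹) :=
            mul_le_mul_of_nonneg_left h2 (by positivity)
      _ = ν * t / α * (α * ξ ^ 2 * (1 + α * ξ ^ 2)⁻¹) := by ring
      _ ≤ ν * t / α * 1 := mul_le_mul_of_nonneg_left hle (by positivity)
      _ ≤ ν * T / α := by rw [mul_one]; gcongr
    have h3 : |α * ξ ^ 2 * (Ew ν α ξ t - cw ν α t) - cw ν α t| ≤ ν * T / α + 1 := by
      rw [abs_le]
      constructor
      · have : 0 ≤ α * ξ ^ 2 * (Ew ν α ξ t - cw ν α t) := by positivity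
        nlinarith
      · nlinarith
    have hx : |ξ * Real.sin (ξ * y)| ≤ (2 * Real.sqrt α)⁻¹ * (1 + α * ξ ^ 2) := by
      rw [abs_mul, abs_of_pos hξ0]
      calc ξ * |Real.sin (ξ * y)| ≤ ξ * 1 :=
            mul_le_mul_of_nonneg_left (Real.abs_sin_le_one _) hξ0.le
      _ ≤ (2 * Real.sqrt α)⁻¹ * (1 + α * ξ ^ 2) := by rw [mul_one]; exact xi_le_D hα
    rw [abs_div, abs_of_pos (pow_pos hD 2), abs_mul, abs_mul,
      abs_of_pos (div_pos hν hα)]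
    calc ν / α * |ξ * Real.sin (ξ * y)| * |α * ξ ^ 2 * (Ew ν α ξ t - cw ν α t) - cw ν α t| /
          (1 + α * ξ ^ 2) ^ 2
        ≤ ν / α * ((2 * Real.sqrt α)⁻¹ * (1 + α * ξ ^ 2)) * (ν * T / α + 1) /
          (1 + α * ξ ^ 2) ^ 2 := by gcongr
    _ = ν / α * ((2 * Real.sqrt α)⁻¹ * (ν * T / α + 1)) * (1 + α * ξ ^ 2)⁻¹ := by
        field_simp

lemma int_Pcos (hν : 0 < ν) (hα : 0 < α) (y : ℝ) :
    IntegrableOn (fun ξ : ℝ => Real.cos (ξ * y) / (1 + α * ξ ^ 2)) (Ioi 0) := by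
  apply cc_int_of_le hα (M := 1)
  · refine Continuous.aestronglyMeasurable ?_ |>.restrict
    exact (Real.continuous_cos.comp (by fun_prop)).div (by fun_prop)
      fun ξ => (Dpos hα ξ).ne'
  · intro ξ hξ
    have hD := Dpos hα ξ
    rw [abs_div, abs_of_pos hD, one_mul]
    calc |Real.cos (ξ * y)| / (1 + α * ξ ^ 2) ≤ 1 / (1 + α * ξ ^ 2) := by
          gcongr; exact Real.abs_cos_le_one _
    _ = (1 + α * ξ ^ 2)⁻¹ := one_div _

lemma PP_alt (hα : 0 < α) {y : ℝ} (hy : 0 < y) :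
    (∫ ξ in Ioi (0:ℝ), Real.cos (ξ * y) / (1 + α * ξ ^ 2)) = PP α y := by
  have key := integral_comp_mul_left_Ioi
    (fun u => y * Real.cos u / (y ^ 2 + α * u ^ 2)) 0 hy
  rw [mul_zero] at key
  have h1 : (fun ξ : ℝ => Real.cos (ξ * y) / (1 + α * ξ ^ 2)) =
      fun ξ : ℝ => y * (y * Real.cos (y * ξ) / (y ^ 2 + α * (y * ξ) ^ 2)) := by
    funext ξ
    rw [mul_comm ξ y]
    have hD := (Dpos hα ξ).ne'
    field_simp
  rw [h1, MeasureTheory.integral_const_mul, key, smul_eq_mul, PP]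
  field_simp

lemma AA_split (hν : 0 < ν) (hα : 0 < α) {y t : ℝ} (hy : 0 < y) (ht : 0 ≤ t) :
    AA ν α y t = cw ν α t * PP α y + QQ ν α y t := by
  unfold AA QQ
  have h1 : (fun ξ : ℝ => Real.cos (ξ * y) / (1 + α * ξ ^ 2) * Ew ν α ξ t) =
      fun ξ : ℝ => Real.cos (ξ * y) / (1 + α * ξ ^ 2) * cw ν α t +
        Real.cos (ξ * y) / (1 + α * ξ ^ 2) * (Ew ν α ξ t - cw ν α t) := by
    funext ξ; ring
  rw [h1, MeasureTheory.integral_add ((int_Pcos hν hα y).mul_const _) (int_Q hν hα y ht),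
    MeasureTheory.integral_mul_const, PP_alt hα hy, mul_comm]

lemma KT_split (hν : 0 < ν) (hα : 0 < α) (y : ℝ) {t : ℝ} (ht : 0 ≤ t) :
    KT ν α y t = ν * QY ν α y t + α * QYT ν α y t := by
  unfold KT QY QYT
  have h1 : (fun ξ : ℝ => -(ν * ξ) * Real.sin (ξ * y) / (1 + α * ξ ^ 2) ^ 2 * Ew ν α ξ t) =
      fun ξ : ℝ => ν * (-(ξ * Real.sin (ξ * y)) / (1 + α * ξ ^ 2) * (Ew ν α ξ t - cw ν α t)) +
        α * (ν / α * (ξ * Real.sin (ξ * y)) *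
          (α * ξ ^ 2 * (Ew ν α ξ t - cw ν α t) - cw ν α t) / (1 + α * ξ ^ 2) ^ 2) := by
    funext ξ
    have hD := (Dpos hα ξ).ne'
    field_simp
    ring
  rw [h1, MeasureTheory.integral_add ((int_QY hν hα y ht).const_mul ν)
    ((int_QYT hν hα y ht le_rfl).const_mul α),
    MeasureTheory.integral_const_mul, MeasureTheory.integral_const_mul]

lemma int_xiD2 (hα : 0 < α) : IntegrableOn (fun ξ : ℝ => ξ / (1 + α * ξ ^ 2) ^ 2) (Ioi 0) := by
  apply cc_int_of_le hα (M := (2 * Real.sqrt α)⁻¹)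
  · refine Continuous.aestronglyMeasurable ?_ |>.restrict
    exact continuous_id.div (by fun_prop) fun ξ => pow_ne_zero 2 (Dpos hα ξ).ne'
  · intro ξ hξ
    have hξ0 : (0:ℝ) < ξ := hξ
    have hD := Dpos hα ξ
    have hsq := Real.sqrt_pos.mpr hα
    rw [abs_div, abs_of_pos hξ0, abs_of_pos (pow_pos hD 2)]
    calc ξ / (1 + α * ξ ^ 2) ^ 2
        ≤ (2 * Real.sqrt α)⁻¹ * (1 + α * ξ ^ 2) / (1 + α * ξ ^ 2) ^ 2 := by
          gcongr; exact xi_le_D hα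
    _ = (2 * Real.sqrt α)⁻¹ * (1 + α * ξ ^ 2)⁻¹ := by field_simp

/-- `∂K/∂t = KT`. -/
lemma hasDeriv_K_t (hν : 0 < ν) (hα : 0 < α) (y : ℝ) {t : ℝ} (ht : 0 < t) :
    HasDerivAt (fun τ => KK ν α y τ) (KT ν α y t) t := by
  unfold KK KT
  have main := hasDerivAt_integral_of_dominated_loc_of_deriv_le
    (μ := volume.restrict (Ioi 0)) (x₀ := t)
    (F := fun τ ξ => Real.sin (ξ * y) / (ξ * (1 + α * ξ ^ 2)) * Ew ν α ξ τ)
    (F' := fun τ ξ => -(ν * ξ) * Real.sin (ξ * y) / (1 + α * ξ ^ 2) ^ 2 * Ew ν α ξ τ)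
    (bound := fun ξ => ν * (ξ / (1 + α * ξ ^ 2) ^ 2))
    (Metric.ball_mem_nhds t (half_pos ht)) ?_ ?_ ?_ ?_ ?_ ?_
  · exact main.2
  · filter_upwards [IsOpen.mem_nhds isOpen_Ioi ht] with τ hτ
    exact (int_K hν hα y (le_of_lt hτ)).aestronglyMeasurable
  · exact int_K hν hα y ht.le
  · exact (int_KT hν hα y ht.le).aestronglyMeasurable
  · rw [ae_restrict_iff' measurableSet_Ioi]
    filter_upwards with ξ hξ
    intro τ hτ
    have hξ0 : (0:ℝ) < ξ := hξ
    have hD := Dpos hα ξ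
    rw [Real.ball_eq_Ioo] at hτ
    have hτ0 : (0:ℝ) ≤ τ := by
      have := hτ.1; linarith
    have hE1 := Ew_le_one hν hα hτ0 ξ
    have hEp := Ew_pos ν α ξ τ
    rw [Real.norm_eq_abs, abs_mul, abs_div, abs_mul, abs_neg,
      abs_of_pos (mul_pos hν hξ0), abs_of_pos (pow_pos hD 2), abs_of_pos hEp]
    calc ν * ξ * |Real.sin (ξ * y)| / (1 + α * ξ ^ 2) ^ 2 * Ew ν α ξ τ
        ≤ ν * ξ * 1 / (1 + α * ξ ^ 2) ^ 2 * 1 := by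
          gcongr; exact Real.abs_sin_le_one _
    _ = ν * (ξ / (1 + α * ξ ^ 2) ^ 2) := by ring
  · exact (int_xiD2 hα).const_mul ν
  · rw [ae_restrict_iff' measurableSet_Ioi]
    filter_upwards with ξ hξ
    intro τ hτ
    have hξ0 : (0:ℝ) < ξ := hξ
    have hD := Dpos hα ξ
    set c₁ : ℝ := -(ν * ξ ^ 2) / (1 + α * ξ ^ 2) with hc₁
    have hEe : ∀ σ : ℝ, Ew ν α ξ σ = Real.exp (c₁ * σ) := by
      intro σ; rw [Ew, hc₁]; congr 1; ring
    have hder : HasDerivAt (fun σ : ℝ => Real.sin (ξ * y) / (ξ * (1 + α * ξ ^ 2)) *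
        Real.exp (c₁ * σ)) (Real.sin (ξ * y) / (ξ * (1 + α * ξ ^ 2)) *
        (Real.exp (c₁ * τ) * (c₁ * 1))) τ := by
      exact (((hasDerivAt_id τ).const_mul c₁).exp).const_mul _
    simp only [← hEe] at hder
    convert hder using 1 <;> try rfl
    rw [hEe, hc₁]
    field_simp

/-- `∂K/∂y = A`. -/
lemma hasDeriv_K_y (hν : 0 < ν) (hα : 0 < α) {y t : ℝ} (ht : 0 < t) :
    HasDerivAt (fun z => KK ν α z t) (AA ν α y t) y := by
  unfold KK AA
  have main := hasDerivAt_integral_of_dominated_loc_of_deriv_le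
    (μ := volume.restrict (Ioi 0)) (x₀ := y)
    (F := fun z ξ => Real.sin (ξ * z) / (ξ * (1 + α * ξ ^ 2)) * Ew ν α ξ t)
    (F' := fun z ξ => Real.cos (ξ * z) / (1 + α * ξ ^ 2) * Ew ν α ξ t)
    (bound := fun ξ => (1 + α * ξ ^ 2)⁻¹)
    (Metric.ball_mem_nhds y one_pos) ?_ ?_ ?_ ?_ ?_ ?_
  · exact main.2
  · filter_upwards with z
    exact (int_K hν hα z ht.le).aestronglyMeasurable
  · exact int_K hν hα y ht.le
  · exact (int_A hν hα y ht.le).aestronglyMeasurable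
  · rw [ae_restrict_iff' measurableSet_Ioi]
    filter_upwards with ξ hξ
    intro z hz
    have hD := Dpos hα ξ
    have hE1 := Ew_le_one hν hα ht.le ξ
    have hEp := Ew_pos ν α ξ t
    rw [Real.norm_eq_abs, abs_mul, abs_div, abs_of_pos hD, abs_of_pos hEp]
    calc |Real.cos (ξ * z)| / (1 + α * ξ ^ 2) * Ew ν α ξ t
        ≤ 1 / (1 + α * ξ ^ 2) * 1 := by gcongr; exact Real.abs_cos_le_one _
    _ = (1 + α * ξ ^ 2)⁻¹ := by rw [mul_one, one_div]
  · exact cc_intD hα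
  · rw [ae_restrict_iff' measurableSet_Ioi]
    filter_upwards with ξ hξ
    intro z hz
    have hξ0 : (0:ℝ) < ξ := hξ
    have hD := Dpos hα ξ
    have hder : HasDerivAt (fun w : ℝ => Real.sin (ξ * w) / (ξ * (1 + α * ξ ^ 2)) *
        Ew ν α ξ t) (Real.cos (ξ * z) * (ξ * 1) / (ξ * (1 + α * ξ ^ 2)) * Ew ν α ξ t) z :=
      ((((hasDerivAt_id z).const_mul ξ).sin).div_const _).mul_const _
    convert hder using 1 <;> try rfl
    field_simp

/-- `∂P/∂y = P'` for `y > 0`. -/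
lemma hasDeriv_P (hα : 0 < α) {y : ℝ} (hy : 0 < y) :
    HasDerivAt (fun z => PP α z) (PP' α y) y := by
  unfold PP PP'
  have main := hasDerivAt_integral_of_dominated_loc_of_deriv_le
    (μ := volume.restrict (Ioi 0)) (x₀ := y)
    (F := fun z u => z * Real.cos u / (z ^ 2 + α * u ^ 2))
    (F' := fun z u => Real.cos u * (α * u ^ 2 - z ^ 2) / (z ^ 2 + α * u ^ 2) ^ 2)
    (bound := fun u => ((y / 2) ^ 2 + α * u ^ 2)⁻¹)
    (Metric.ball_mem_nhds y (half_pos hy)) ?_ ?_ ?_ ?_ ?_ ?_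
  · exact main.2
  · filter_upwards with z
    apply ContinuousOn.aestronglyMeasurable _ measurableSet_Ioi
    intro u hu
    have hu0 : (0:ℝ) < u := hu
    apply ContinuousAt.continuousWithinAt
    exact (by fun_prop : Continuous fun u : ℝ => z * Real.cos u).continuousAt.div
      (by fun_prop : Continuous fun u : ℝ => z ^ 2 + α * u ^ 2).continuousAt
      (by positivity)
  · exact int_P hα hy.ne'
  · exact (int_P' hα hy.ne').aestronglyMeasurable
  · rw [ae_restrict_iff' measurableSet_Ioi]
    filter_upwards with u hu
    intro z hz
    have hu0 : (0:ℝ) < u := hu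
    rw [Real.ball_eq_Ioo] at hz
    have hz2 : (y / 2) ^ 2 ≤ z ^ 2 := by
      have h1 : y / 2 < z := by have := hz.1; linarith
      have h2 : (0:ℝ) < y / 2 := half_pos hy
      nlinarith
    have hW : (0:ℝ) < z ^ 2 + α * u ^ 2 := by positivity
    have hW' : (0:ℝ) < (y / 2) ^ 2 + α * u ^ 2 := by positivity
    have hnum : |Real.cos u * (α * u ^ 2 - z ^ 2)| ≤ z ^ 2 + α * u ^ 2 := by
      rw [abs_mul]
      calc |Real.cos u| * |α * u ^ 2 - z ^ 2| ≤ 1 * (z ^ 2 + α * u ^ 2) := by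
            apply mul_le_mul (Real.abs_cos_le_one _) _ (abs_nonneg _) zero_le_one
            rw [abs_le]
            constructor <;> nlinarith [mul_nonneg hα.le (sq_nonneg u), sq_nonneg z]
      _ = z ^ 2 + α * u ^ 2 := one_mul _
    rw [Real.norm_eq_abs, abs_div, abs_of_pos (pow_pos hW 2)]
    calc |Real.cos u * (α * u ^ 2 - z ^ 2)| / (z ^ 2 + α * u ^ 2) ^ 2
        ≤ (z ^ 2 + α * u ^ 2) / (z ^ 2 + α * u ^ 2) ^ 2 := by gcongr
    _ = (z ^ 2 + α * u ^ 2)⁻¹ := by field_simp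
    _ ≤ ((y / 2) ^ 2 + α * u ^ 2)⁻¹ := by gcongr
  · exact cc_intB hα (by positivity)
  · rw [ae_restrict_iff' measurableSet_Ioi]
    filter_upwards with u hu
    intro z hz
    have hu0 : (0:ℝ) < u := hu
    have hW : (0:ℝ) < z ^ 2 + α * u ^ 2 := by positivity
    have hder := ((hasDerivAt_id z).mul_const (Real.cos u)).div
      (((hasDerivAt_pow 2 z)).add_const (α * u ^ 2)) hW.ne'
    simp only [id] at hder
    convert hder using 1 <;> try rfl
    field_simp
    ring

/-- `∂Q/∂y = QY`. -/
lemma hasDeriv_Q_y (hν : 0 < ν) (hα : 0 < α) {y t : ℝ} (ht : 0 ≤ t) :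
    HasDerivAt (fun z => QQ ν α z t) (QY ν α y t) y := by
  unfold QQ QY
  have main := hasDerivAt_integral_of_dominated_loc_of_deriv_le
    (μ := volume.restrict (Ioi 0)) (x₀ := y)
    (F := fun z ξ => Real.cos (ξ * z) / (1 + α * ξ ^ 2) * (Ew ν α ξ t - cw ν α t))
    (F' := fun z ξ => -(ξ * Real.sin (ξ * z)) / (1 + α * ξ ^ 2) * (Ew ν α ξ t - cw ν α t))
    (bound := fun ξ => ν * t / α * (ξ / (1 + α * ξ ^ 2) ^ 2))
    (Metric.ball_mem_nhds y one_pos) ?_ ?_ ?_ ?_ ?_ ?_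
  · exact main.2
  · filter_upwards with z
    exact (int_Q hν hα z ht).aestronglyMeasurable
  · exact int_Q hν hα y ht
  · exact (int_QY hν hα y ht).aestronglyMeasurable
  · rw [ae_restrict_iff' measurableSet_Ioi]
    filter_upwards with ξ hξ
    intro z hz
    have hξ0 : (0:ℝ) < ξ := hξ
    have hD := Dpos hα ξ
    have h0 := Ew_sub_cw_nonneg hν hα ht ξ
    have h2 := Ew_sub_cw_le hν hα ht ξ
    rw [Real.norm_eq_abs, abs_mul, abs_div, abs_neg, abs_mul, abs_of_pos hξ0,
      abs_of_pos hD, abs_of_nonneg h0]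
    calc ξ * |Real.sin (ξ * z)| / (1 + α * ξ ^ 2) * (Ew ν α ξ t - cw ν α t)
        ≤ ξ * 1 / (1 + α * ξ ^ 2) * (ν * t / α * (1 + α * ξ ^ 2)⁻¹) := by
          gcongr; exact Real.abs_sin_le_one _
    _ = ν * t / α * (ξ / (1 + α * ξ ^ 2) ^ 2) := by field_simp
  · exact (int_xiD2 hα).const_mul _
  · rw [ae_restrict_iff' measurableSet_Ioi]
    filter_upwards with ξ hξ
    intro z hz
    have hD := Dpos hα ξ
    have hder : HasDerivAt (fun w : ℝ => Real.cos (ξ * w) / (1 + α * ξ ^ 2) *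
        (Ew ν α ξ t - cw ν α t))
        (-Real.sin (ξ * z) * (ξ * 1) / (1 + α * ξ ^ 2) * (Ew ν α ξ t - cw ν α t)) z :=
      ((((hasDerivAt_id z).const_mul ξ).cos).div_const _).mul_const _
    convert hder using 1 <;> try rfl
    ring

/-- `∂QY/∂t = QYT`. -/
lemma hasDeriv_QY_t (hν : 0 < ν) (hα : 0 < α) (y : ℝ) {t : ℝ} (ht : 0 < t) :
    HasDerivAt (fun τ => QY ν α y τ) (QYT ν α y t) t := by
  unfold QY QYT
  have main := hasDerivAt_integral_of_dominated_loc_of_deriv_le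
    (μ := volume.restrict (Ioi 0)) (x₀ := t)
    (F := fun τ ξ => -(ξ * Real.sin (ξ * y)) / (1 + α * ξ ^ 2) * (Ew ν α ξ τ - cw ν α τ))
    (F' := fun τ ξ => ν / α * (ξ * Real.sin (ξ * y)) *
      (α * ξ ^ 2 * (Ew ν α ξ τ - cw ν α τ) - cw ν α τ) / (1 + α * ξ ^ 2) ^ 2)
    (bound := fun ξ => ν / α * ((2 * Real.sqrt α)⁻¹ * (ν * (2 * t) / α + 1)) *
      (1 + α * ξ ^ 2)⁻¹)
    (Metric.ball_mem_nhds t (half_pos ht)) ?_ ?_ ?_ ?_ ?_ ?_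
  · exact main.2
  · filter_upwards [IsOpen.mem_nhds isOpen_Ioi ht] with τ hτ
    exact (int_QY hν hα y (le_of_lt hτ)).aestronglyMeasurable
  · exact int_QY hν hα y ht.le
  · exact (int_QYT hν hα y ht.le le_rfl).aestronglyMeasurable
  · rw [ae_restrict_iff' measurableSet_Ioi]
    filter_upwards with ξ hξ
    intro τ hτ
    have hξ0 : (0:ℝ) < ξ := hξ
    have hD := Dpos hα ξ
    rw [Real.ball_eq_Ioo] at hτ
    have hτ0 : (0:ℝ) ≤ τ := by have := hτ.1; linarith
    have hτT : τ ≤ 2 * t := by have := hτ.2; linarith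
    have h0 := Ew_sub_cw_nonneg hν hα hτ0 ξ
    have h2 := Ew_sub_cw_le hν hα hτ0 ξ
    have hc0 := cw_pos ν α τ
    have hc1 := cw_le_one hν hα hτ0 (α := α)
    have hsq := Real.sqrt_pos.mpr hα
    have hup : α * ξ ^ 2 * (Ew ν α ξ τ - cw ν α τ) ≤ ν * (2 * t) / α := by
      have hle : α * ξ ^ 2 * (1 + α * ξ ^ 2)⁻¹ ≤ 1 := by
        rw [← div_eq_mul_inv, div_le_one hD]
        nlinarith [mul_nonneg hα.le (sq_nonneg ξ)]
      calc α * ξ ^ 2 * (Ew ν α ξ τ - cw ν α τ)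
          ≤ α * ξ ^ 2 * (ν * τ / α * (1 + α * ξ ^ 2)⁻¹) :=
            mul_le_mul_of_nonneg_left h2 (by positivity)
      _ = ν * τ / α * (α * ξ ^ 2 * (1 + α * ξ ^ 2)⁻¹) := by ring
      _ ≤ ν * τ / α * 1 := mul_le_mul_of_nonneg_left hle (by positivity)
      _ ≤ ν * (2 * t) / α := by rw [mul_one]; gcongr
    have h3 : |α * ξ ^ 2 * (Ew ν α ξ τ - cw ν α τ) - cw ν α τ| ≤ ν * (2 * t) / α + 1 := by
      rw [abs_le]
      constructor
      · have : 0 ≤ α * ξ ^ 2 * (Ew ν α ξ τ - cw ν α τ) := by positivity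
        nlinarith
      · nlinarith
    have hx : |ξ * Real.sin (ξ * y)| ≤ (2 * Real.sqrt α)⁻¹ * (1 + α * ξ ^ 2) := by
      rw [abs_mul, abs_of_pos hξ0]
      calc ξ * |Real.sin (ξ * y)| ≤ ξ * 1 :=
            mul_le_mul_of_nonneg_left (Real.abs_sin_le_one _) hξ0.le
      _ ≤ (2 * Real.sqrt α)⁻¹ * (1 + α * ξ ^ 2) := by rw [mul_one]; exact xi_le_D hα
    rw [Real.norm_eq_abs, abs_div, abs_of_pos (pow_pos hD 2), abs_mul, abs_mul,
      abs_of_pos (div_pos hν hα)]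
    calc ν / α * |ξ * Real.sin (ξ * y)| *
          |α * ξ ^ 2 * (Ew ν α ξ τ - cw ν α τ) - cw ν α τ| / (1 + α * ξ ^ 2) ^ 2
        ≤ ν / α * ((2 * Real.sqrt α)⁻¹ * (1 + α * ξ ^ 2)) * (ν * (2 * t) / α + 1) /
          (1 + α * ξ ^ 2) ^ 2 := by gcongr
    _ = ν / α * ((2 * Real.sqrt α)⁻¹ * (ν * (2 * t) / α + 1)) * (1 + α * ξ ^ 2)⁻¹ := by
        field_simp
  · exact (cc_intD hα).const_mul _
  · rw [ae_restrict_iff' measurableSet_Ioi]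
    filter_upwards with ξ hξ
    intro τ hτ
    have hξ0 : (0:ℝ) < ξ := hξ
    have hD := Dpos hα ξ
    set c₁ : ℝ := -(ν * ξ ^ 2) / (1 + α * ξ ^ 2) with hc₁
    have hEe : ∀ σ : ℝ, Ew ν α ξ σ = Real.exp (c₁ * σ) := by
      intro σ; rw [Ew, hc₁]; congr 1; ring
    have hce : ∀ σ : ℝ, cw ν α σ = Real.exp (-(ν / α) * σ) := fun σ => rfl
    have hder : HasDerivAt (fun σ : ℝ => -(ξ * Real.sin (ξ * y)) / (1 + α * ξ ^ 2) *
        (Real.exp (c₁ * σ) - Real.exp (-(ν / α) * σ)))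
        (-(ξ * Real.sin (ξ * y)) / (1 + α * ξ ^ 2) *
          (Real.exp (c₁ * τ) * (c₁ * 1) - Real.exp (-(ν / α) * τ) * (-(ν / α) * 1))) τ := by
      exact ((((hasDerivAt_id τ).const_mul c₁).exp).sub
        (((hasDerivAt_id τ).const_mul (-(ν / α))).exp)).const_mul _
    simp only [← hEe, ← hce] at hder
    convert hder using 1 <;> try rfl
    rw [hEe, hce, hc₁]
    field_simp
    ring

lemma intervalIntegrable_of_bounded {f : ℝ → ℝ}
    (hm : AEStronglyMeasurable f volume) {M R : ℝ} (hM : ∀ ξ, |f ξ| ≤ M) :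
    IntervalIntegrable f volume 0 R := by
  rw [intervalIntegrable_iff]
  refine Integrable.mono' (g := fun _ => M)
    ((integrableOn_const_iff).mpr (Or.inr measure_Ioc_lt_top)) hm.restrict ?_
  filter_upwards with ξ using by rw [Real.norm_eq_abs]; exact hM ξ

lemma abs_xi_le_D (hα : 0 < α) (ξ : ℝ) :
    |ξ| ≤ (2 * Real.sqrt α)⁻¹ * (1 + α * ξ ^ 2) := by
  have h := xi_le_D hα (ξ := |ξ|)
  rwa [sq_abs] at h

/-- Identification of `I₁ - α I₂` with the absolutely convergent integral `KK`. -/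
lemma KK_eq_I (hν : 0 < ν) (hα : 0 < α) {y t : ℝ} (hy : 0 < y) (ht : 0 < t)
    {I₁v I₂v : ℝ}
    (h1 : Tendsto (fun R => ∫ ξ in (0:ℝ)..R,
        (Real.sin (ξ * y) / ξ) * Real.exp (-(ν * ξ ^ 2 * t) / (1 + α * ξ ^ 2)))
      atTop (nhds I₁v))
    (h2 : Tendsto (fun R => ∫ ξ in (0:ℝ)..R,
        (ξ * Real.sin (ξ * y) / (1 + α * ξ ^ 2)) *
          Real.exp (-(ν * ξ ^ 2 * t) / (1 + α * ξ ^ 2))) atTop (nhds I₂v)) :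
    I₁v - α * I₂v = KK ν α y t := by
  have hsin_div : ∀ ξ : ℝ, |Real.sin (ξ * y) / ξ| ≤ |y| := by
    intro ξ
    rcases eq_or_ne ξ 0 with h | h
    · simp [h]
    · rw [abs_div]
      rw [div_le_iff₀ (abs_pos.mpr h)]
      calc |Real.sin (ξ * y)| ≤ |ξ * y| := Real.abs_sin_le_abs
      _ = |y| * |ξ| := by rw [abs_mul]; ring
  have hE1 : ∀ ξ : ℝ, Ew ν α ξ t ≤ 1 := Ew_le_one hν hα ht.le
  have hEp : ∀ ξ : ℝ, 0 < Ew ν α ξ t := fun ξ => Ew_pos ν α ξ t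
  have hmE : AEStronglyMeasurable (fun ξ : ℝ => Ew ν α ξ t) volume :=
    (contE hα ν t).aestronglyMeasurable
  have T2 : Tendsto (fun R => ∫ ξ in (0:ℝ)..R,
      Real.sin (ξ * y) / (ξ * (1 + α * ξ ^ 2)) * Ew ν α ξ t) atTop
      (nhds (KK ν α y t)) := by
    unfold KK
    exact intervalIntegral_tendsto_integral_Ioi 0 (int_K hν hα y ht.le) tendsto_id
  have T1 := h1.sub (h2.const_mul α)
  refine tendsto_nhds_unique (T1.congr fun R => ?_) T2
  have hf2 : IntervalIntegrable (fun ξ : ℝ => (ξ * Real.sin (ξ * y) / (1 + α * ξ ^ 2)) *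
      Ew ν α ξ t) volume 0 R := by
    apply intervalIntegrable_of_bounded (M := (2 * Real.sqrt α)⁻¹)
    · exact (((measurable_id.mul (Real.measurable_sin.comp
        (measurable_id.mul_const y))).div (by fun_prop)).aestronglyMeasurable.mul hmE)
    · intro ξ
      have hD := Dpos hα ξ
      rw [abs_mul, abs_div, abs_of_pos hD, abs_of_pos (hEp ξ), abs_mul]
      have hstep : |ξ| * |Real.sin (ξ * y)| ≤ (2 * Real.sqrt α)⁻¹ * (1 + α * ξ ^ 2) := by
        calc |ξ| * |Real.sin (ξ * y)| ≤ (2 * Real.sqrt α)⁻¹ * (1 + α * ξ ^ 2) * 1 :=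
              mul_le_mul (abs_xi_le_D hα ξ) (Real.abs_sin_le_one _)
                (abs_nonneg _) (by positivity)
        _ = (2 * Real.sqrt α)⁻¹ * (1 + α * ξ ^ 2) := mul_one _
      calc |ξ| * |Real.sin (ξ * y)| / (1 + α * ξ ^ 2) * Ew ν α ξ t
          ≤ (2 * Real.sqrt α)⁻¹ * (1 + α * ξ ^ 2) / (1 + α * ξ ^ 2) * 1 := by
            gcongr
            · exact (hEp ξ).le
            · exact hE1 ξ
      _ = (2 * Real.sqrt α)⁻¹ := by field_simp
  have hkK : IntervalIntegrable (fun ξ : ℝ =>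
      Real.sin (ξ * y) / (ξ * (1 + α * ξ ^ 2)) * Ew ν α ξ t) volume 0 R := by
    apply intervalIntegrable_of_bounded (M := |y|)
    · exact ((Real.measurable_sin.comp (measurable_id.mul_const y)).div
        (by fun_prop)).aestronglyMeasurable.mul hmE
    · intro ξ
      have hD := Dpos hα ξ
      have hD1 : (1:ℝ) ≤ 1 + α * ξ ^ 2 := by nlinarith [mul_nonneg hα.le (sq_nonneg ξ)]
      have key : |Real.sin (ξ * y) / (ξ * (1 + α * ξ ^ 2))| ≤ |y| := by
        have h0 : Real.sin (ξ * y) / (ξ * (1 + α * ξ ^ 2)) =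
            Real.sin (ξ * y) / ξ / (1 + α * ξ ^ 2) := by
          rw [div_div]
        rw [h0, abs_div, abs_of_pos hD]
        calc |Real.sin (ξ * y) / ξ| / (1 + α * ξ ^ 2)
            ≤ |y| / 1 := div_le_div₀ (abs_nonneg y) (hsin_div ξ) one_pos hD1
        _ = |y| := div_one _
      rw [abs_mul, abs_of_pos (hEp ξ)]
      calc |Real.sin (ξ * y) / (ξ * (1 + α * ξ ^ 2))| * Ew ν α ξ t
          ≤ |y| * 1 := mul_le_mul key (hE1 ξ) (hEp ξ).le (abs_nonneg y)
      _ = |y| := mul_one _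
  have hpt : ∀ ξ : ℝ, (Real.sin (ξ * y) / ξ) * Real.exp (-(ν * ξ ^ 2 * t) / (1 + α * ξ ^ 2)) =
      Real.sin (ξ * y) / (ξ * (1 + α * ξ ^ 2)) * Ew ν α ξ t +
        α * ((ξ * Real.sin (ξ * y) / (1 + α * ξ ^ 2)) * Ew ν α ξ t) := by
    intro ξ
    rcases eq_or_ne ξ 0 with h | h
    · simp [h, Ew]
    · have hD := (Dpos hα ξ).ne'
      rw [show Real.exp (-(ν * ξ ^ 2 * t) / (1 + α * ξ ^ 2)) = Ew ν α ξ t from rfl]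
      field_simp
  have hlhs : (∫ ξ in (0:ℝ)..R,
      (Real.sin (ξ * y) / ξ) * Real.exp (-(ν * ξ ^ 2 * t) / (1 + α * ξ ^ 2))) =
      (∫ ξ in (0:ℝ)..R, Real.sin (ξ * y) / (ξ * (1 + α * ξ ^ 2)) * Ew ν α ξ t) +
        α * ∫ ξ in (0:ℝ)..R, (ξ * Real.sin (ξ * y) / (1 + α * ξ ^ 2)) * Ew ν α ξ t := by
    rw [← intervalIntegral.integral_const_mul, ← intervalIntegral.integral_add hkK
      (hf2.const_mul α)]
    exact intervalIntegral.integral_congr fun ξ _ => hpt ξ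
  rw [hlhs]
  simp only [Ew]
  ring

end CClemmas

/-- The Fourier sine transform solution of Christov and Christov satisfies the governing
PDE `∂u/∂t = ν ∂²u/∂y² + α ∂³u/∂t∂y²` of the second-grade fluid on the quarter plane
`y > 0`, `t > 0`.  The two integrals over `(0,∞)` are improper, i.e. limits of `∫₀ᴿ` as
`R → ∞`. -/
theorem stmt2 (ν α U₀ : ℝ) (hν : 0 < ν) (hα : 0 < α) (I₁ I₂ u : ℝ → ℝ → ℝ)
    (hI₁ : ∀ y t : ℝ, 0 < y → 0 < t →
      Tendsto (fun R => ∫ ξ in (0:ℝ)..R,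
          (Real.sin (ξ * y) / ξ) * Real.exp (-(ν * ξ ^ 2 * t) / (1 + α * ξ ^ 2)))
        atTop (nhds (I₁ y t)))
    (hI₂ : ∀ y t : ℝ, 0 < y → 0 < t →
      Tendsto (fun R => ∫ ξ in (0:ℝ)..R,
          (ξ * Real.sin (ξ * y) / (1 + α * ξ ^ 2)) *
            Real.exp (-(ν * ξ ^ 2 * t) / (1 + α * ξ ^ 2)))
        atTop (nhds (I₂ y t)))
    (hu : ∀ y t : ℝ, 0 < y → 0 < t →
      u y t = U₀ * (1 - (2 / Real.pi) * I₁ y t + (2 * α / Real.pi) * I₂ y t)) :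
    ∃ ut uy uyy uyyt : ℝ → ℝ → ℝ,
      (∀ y t : ℝ, 0 < y → 0 < t → HasDerivAt (fun τ => u y τ) (ut y t) t) ∧
      (∀ y t : ℝ, 0 < y → 0 < t → HasDerivAt (fun z => u z t) (uy y t) y) ∧
      (∀ y t : ℝ, 0 < y → 0 < t → HasDerivAt (fun z => uy z t) (uyy y t) y) ∧
      (∀ y t : ℝ, 0 < y → 0 < t → HasDerivAt (fun τ => uyy y τ) (uyyt y t) t) ∧
      (∀ y t : ℝ, 0 < y → 0 < t → ut y t = ν * uyy y t + α * uyyt y t) := by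
  -- on the open quarter plane, `u` coincides with `U₀ (1 - (2/π) K)`
  have hKI : ∀ z τ : ℝ, 0 < z → 0 < τ →
      u z τ = U₀ * (1 - 2 / Real.pi * KK ν α z τ) := by
    intro z τ hz hτ
    have hk := KK_eq_I hν hα hz hτ (hI₁ z τ hz hτ) (hI₂ z τ hz hτ)
    rw [hu z τ hz hτ, ← hk]
    ring
  refine ⟨fun y t => -(U₀ * (2 / Real.pi) * KT ν α y t),
    fun y t => -(U₀ * (2 / Real.pi) * AA ν α y t),
    fun y t => -(U₀ * (2 / Real.pi) * (cw ν α t * PP' α y + QY ν α y t)),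
    fun y t => -(U₀ * (2 / Real.pi) * (-(ν / α) * cw ν α t * PP' α y + QYT ν α y t)),
    ?_, ?_, ?_, ?_, ?_⟩
  · -- ∂u/∂t
    intro y t hy ht
    have hd : HasDerivAt (fun τ => U₀ * (1 - 2 / Real.pi * KK ν α y τ))
        (-(U₀ * (2 / Real.pi) * KT ν α y t)) t := by
      have h := (((hasDeriv_K_t hν hα y ht).const_mul (2 / Real.pi)).const_sub 1).const_mul U₀
      convert h using 1 <;> try rfl
      ring
    apply hd.congr_of_eventuallyEq
    filter_upwards [IsOpen.mem_nhds isOpen_Ioi ht] with τ hτ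
    exact hKI y τ hy hτ
  · -- ∂u/∂y
    intro y t hy ht
    have hd : HasDerivAt (fun z => U₀ * (1 - 2 / Real.pi * KK ν α z t))
        (-(U₀ * (2 / Real.pi) * AA ν α y t)) y := by
      have h := (((hasDeriv_K_y hν hα (y := y) ht).const_mul (2 / Real.pi)).const_sub 1).const_mul U₀
      convert h using 1 <;> try rfl
      ring
    apply hd.congr_of_eventuallyEq
    filter_upwards [IsOpen.mem_nhds isOpen_Ioi hy] with z hz
    exact hKI z t hz ht
  · -- ∂²u/∂y²
    intro y t hy ht
    have hd : HasDerivAt (fun z => -(U₀ * (2 / Real.pi) * (cw ν α t * PP α z + QQ ν α z t)))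
        (-(U₀ * (2 / Real.pi) * (cw ν α t * PP' α y + QY ν α y t))) y := by
      have h := ((((hasDeriv_P hα hy).const_mul (cw ν α t)).add
        (hasDeriv_Q_y hν hα (y := y) ht.le)).const_mul (U₀ * (2 / Real.pi))).neg
      convert h using 1 <;> (try rfl) <;> ring
    apply hd.congr_of_eventuallyEq
    filter_upwards [IsOpen.mem_nhds isOpen_Ioi hy] with z hz
    rw [AA_split hν hα hz ht.le]
  · -- ∂³u/∂t∂y²
    intro y t hy ht
    have hcw : HasDerivAt (fun τ => cw ν α τ) (-(ν / α) * cw ν α t) t := by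
      have h : HasDerivAt (fun τ : ℝ => Real.exp (-(ν / α) * τ))
          (Real.exp (-(ν / α) * t) * (-(ν / α) * 1)) t :=
        ((hasDerivAt_id t).const_mul (-(ν / α))).exp
      have h2 : HasDerivAt (fun τ : ℝ => cw ν α τ)
          (Real.exp (-(ν / α) * t) * (-(ν / α) * 1)) t := h
      convert h2 using 1
      rw [show cw ν α t = Real.exp (-(ν / α) * t) from rfl]
      ring
    have h := (((hcw.mul_const (PP' α y)).add
      (hasDeriv_QY_t hν hα y ht)).const_mul (U₀ * (2 / Real.pi))).neg
    convert h using 1 <;> try rfl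
  · -- the PDE
    intro y t hy ht
    simp only [KT_split hν hα y ht.le]
    field_simp
    ring
end

section
/- Let ν > 0, U₀ ∈ ℝ, and let erfc(x) := (2/√π)∫_x^∞ e^{−s²} ds. For y > 0, t > 0 let u_α(y,t) := U₀[1 − (2/π)∫₀^∞ (sin(ξy)/ξ) E_α(ξ,t) dξ + (2α/π)∫₀^∞ (ξ sin(ξy)/(1+αξ²)) E_α(ξ,t) dξ], where E_α(ξ,t) := exp(−νξ²t/(1+αξ²)) and the integrals are improper integrals (limits of ∫₀^R as R → ∞). Then for every fixed y > 0 and t > 0, lim_{α→0⁺} u_α(y,t) = U₀ erfc( y/(2√(νt)) ). -/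
open MeasureTheory Filter Real

section Helpers

open Set Complex

lemma cos_gaussian_real' {c : ℝ} (hc : 0 < c) (s : ℝ) :
    ∫ x : ℝ, Real.cos (s * x) * Real.exp (-c * x ^ 2)
      = Real.sqrt (π / c) * Real.exp (-s ^ 2 / (4 * c)) := by
  have hb : (0:ℝ) < (c : ℂ).re := by simpa using hc
  have key := fourierIntegral_gaussian hb (s : ℂ)
  have hnorm : ∀ x : ℝ, ‖Complex.exp (Complex.I * s * x) * Complex.exp (-(c:ℂ) * x ^ 2)‖
      = Real.exp (-c * x ^ 2) := by
    intro x
    rw [norm_mul, Complex.norm_exp, Complex.norm_exp]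
    norm_num [Complex.mul_re, ← Complex.ofReal_pow]
  have hint : Integrable (fun x : ℝ => Complex.exp (Complex.I * s * x) * Complex.exp (-(c:ℂ) * x ^ 2)) := by
    have h1 : Integrable (fun x : ℝ => Real.exp (-c * x ^ 2)) := integrable_exp_neg_mul_sq hc
    refine h1.mono' ?_ (Eventually.of_forall fun x => ?_)
    · apply Continuous.aestronglyMeasurable; fun_prop
    · rw [hnorm x]
  have hre := congrArg Complex.re key
  rw [← RCLike.re_to_complex, ← integral_re hint] at hre
  have h1 : ∀ x : ℝ, (RCLike.re (Complex.exp (Complex.I * s * x) * Complex.exp (-(c:ℂ) * x ^ 2)) : ℝ)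
      = Real.cos (s * x) * Real.exp (-c * x ^ 2) := by
    intro x
    rw [RCLike.re_to_complex,
      show (Complex.I * (s:ℂ) * (x:ℂ)) = ((s * x : ℝ) : ℂ) * Complex.I by push_cast; ring,
      show (-(c:ℂ) * (x:ℂ) ^ 2) = ((-c * x ^ 2 : ℝ) : ℂ) by push_cast; ring,
      ← Complex.ofReal_exp, Complex.mul_re]
    simp only [Complex.exp_ofReal_mul_I_re, Complex.ofReal_re, Complex.ofReal_im, mul_zero,
      sub_zero]
  have h2 : (((π:ℂ) / c) ^ ((1:ℂ)/2) * Complex.exp (-(s:ℂ) ^ 2 / (4 * (c:ℂ)))).re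
      = Real.sqrt (π / c) * Real.exp (-s ^ 2 / (4 * c)) := by
    rw [show ((π:ℂ) / c) = ((π / c : ℝ) : ℂ) by push_cast; ring,
      show (-(s:ℂ) ^ 2 / (4 * (c:ℂ))) = ((-s ^ 2 / (4 * c) : ℝ) : ℂ) by push_cast; ring,
      ← Complex.ofReal_exp, show ((1:ℂ)/2) = ((1/2 : ℝ) : ℂ) by norm_num,
      ← Complex.ofReal_cpow (by positivity), ← Complex.ofReal_mul,
      ← Real.sqrt_eq_rpow, Complex.ofReal_re]
  simp only [h1] at hre
  rw [hre, h2]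

lemma cos_gaussian_Ioi' {c : ℝ} (hc : 0 < c) (s : ℝ) :
    ∫ x in Ioi (0:ℝ), Real.cos (s * x) * Real.exp (-c * x ^ 2)
      = Real.sqrt (π / c) / 2 * Real.exp (-s ^ 2 / (4 * c)) := by
  have h := integral_comp_abs (f := fun u : ℝ => Real.cos (s * u) * Real.exp (-c * u ^ 2))
  have heq : ∀ x : ℝ, Real.cos (s * |x|) * Real.exp (-c * |x| ^ 2)
      = Real.cos (s * x) * Real.exp (-c * x ^ 2) := by
    intro x
    rcases abs_choice x with hx | hx <;> rw [hx] <;>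
      simp [mul_neg, Real.cos_neg, neg_sq]
  simp only [heq] at h
  rw [cos_gaussian_real' hc s] at h
  linarith

lemma sine_gaussian_Ioi' {c y : ℝ} (hc : 0 < c) (hy : 0 < y) :
    ∫ ξ in Ioi (0:ℝ), Real.sin (ξ * y) / ξ * Real.exp (-c * ξ ^ 2)
      = Real.sqrt π * ∫ σ in (0:ℝ)..(y / (2 * Real.sqrt c)), Real.exp (-σ ^ 2) := by
  have h2c : (0:ℝ) < 2 * Real.sqrt c := by positivity
  have step1 : ∀ ξ ∈ Ioi (0:ℝ), Real.sin (ξ * y) / ξ * Real.exp (-c * ξ ^ 2)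
      = ∫ s in Ioc (0:ℝ) y, Real.cos (ξ * s) * Real.exp (-c * ξ ^ 2) := by
    intro ξ hξ
    have hξ0 : (ξ:ℝ) ≠ 0 := ne_of_gt hξ
    rw [← intervalIntegral.integral_of_le hy.le,
      intervalIntegral.integral_mul_const,
      intervalIntegral.integral_comp_mul_left (fun u => Real.cos u) hξ0,
      integral_cos]
    simp [smul_eq_mul, div_eq_inv_mul]
  rw [setIntegral_congr_fun measurableSet_Ioi step1]
  have hint : Integrable (Function.uncurry fun ξ s => Real.cos (ξ * s) * Real.exp (-c * ξ ^ 2))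
      ((volume.restrict (Ioi (0:ℝ))).prod (volume.restrict (Ioc (0:ℝ) y))) := by
    have hb := Integrable.mul_prod (μ := volume.restrict (Ioi (0:ℝ)))
      (ν := volume.restrict (Ioc (0:ℝ) y))
      (f := fun ξ : ℝ => Real.exp (-c * ξ ^ 2)) (g := fun _ : ℝ => (1:ℝ))
      (integrable_exp_neg_mul_sq hc).integrableOn
      ((integrableOn_const_iff (C := (1:ℝ))).mpr (Or.inr measure_Ioc_lt_top))
    simp only [mul_one] at hb
    refine hb.mono' ?_ (Eventually.of_forall fun z => ?_)
    · apply Continuous.aestronglyMeasurable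
      fun_prop
    · obtain ⟨a, b⟩ := z
      simp only [Function.uncurry_apply_pair]
      rw [norm_mul, Real.norm_eq_abs, Real.norm_eq_abs, abs_of_pos (Real.exp_pos _)]
      calc |Real.cos (a * b)| * Real.exp (-c * a ^ 2)
          ≤ 1 * Real.exp (-c * a ^ 2) := by gcongr; exact Real.abs_cos_le_one _
        _ = Real.exp (-c * a ^ 2) := one_mul _
  rw [integral_integral_swap hint]
  have step3 : ∀ s ∈ Ioc (0:ℝ) y, (∫ ξ in Ioi (0:ℝ), Real.cos (ξ * s) * Real.exp (-c * ξ ^ 2))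
      = Real.sqrt (π / c) / 2 * Real.exp (-s ^ 2 / (4 * c)) := by
    intro s _
    rw [← cos_gaussian_Ioi' hc s]
    exact setIntegral_congr_fun measurableSet_Ioi fun ξ _ => by rw [mul_comm ξ s]
  rw [setIntegral_congr_fun measurableSet_Ioc step3]
  rw [integral_const_mul, ← intervalIntegral.integral_of_le hy.le]
  have hsub : ∀ s : ℝ, Real.exp (-s ^ 2 / (4 * c))
      = (fun σ => Real.exp (-σ ^ 2)) (s / (2 * Real.sqrt c)) := by
    intro s
    simp only
    congr 1
    rw [div_pow, mul_pow, Real.sq_sqrt hc.le]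
    ring
  rw [intervalIntegral.integral_congr (g := fun s => (fun σ => Real.exp (-σ ^ 2)) (s / (2 * Real.sqrt c)))
      (fun s _ => hsub s),
    intervalIntegral.integral_comp_div (fun σ => Real.exp (-σ ^ 2)) (ne_of_gt h2c)]
  rw [zero_div, smul_eq_mul, ← mul_assoc]
  have h1 : Real.sqrt (π / c) * Real.sqrt c = Real.sqrt π := by
    rw [← Real.sqrt_mul (by positivity) c]
    congr 1
    field_simp
  rw [show Real.sqrt (π / c) / 2 * (2 * Real.sqrt c) = Real.sqrt (π / c) * Real.sqrt c by ring, h1]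

lemma g_bound' {c y α ξ : ℝ} (hc : 0 < c) (hy : 0 < y) (hα : 0 < α) (hξ : 0 < ξ) :
    |Real.sin (ξ * y) / (ξ * (1 + α * ξ ^ 2)) * Real.exp (-(c * ξ ^ 2) / (1 + α * ξ ^ 2))|
      ≤ min y (1 / (c * ξ ^ 3)) := by
  set D : ℝ := 1 + α * ξ ^ 2 with hD
  have hD1 : 1 ≤ D := by nlinarith
  have hD0 : 0 < D := lt_of_lt_of_le one_pos hD1
  have hE0 : 0 < Real.exp (-(c * ξ ^ 2) / D) := Real.exp_pos _
  have hexp_le_one : Real.exp (-(c * ξ ^ 2) / D) ≤ 1 := by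
    apply Real.exp_le_one_iff.mpr
    apply div_nonpos_of_nonpos_of_nonneg _ hD0.le
    nlinarith
  have habs : |Real.sin (ξ * y) / (ξ * D) * Real.exp (-(c * ξ ^ 2) / D)|
      = |Real.sin (ξ * y)| / (ξ * D) * Real.exp (-(c * ξ ^ 2) / D) := by
    rw [abs_mul, abs_div, abs_of_pos (by positivity : (0:ℝ) < ξ * D), abs_of_pos hE0]
  rw [habs]
  refine le_min ?_ ?_
  · have h1 : |Real.sin (ξ * y)| ≤ ξ * y :=
      (Real.abs_sin_le_abs).trans_eq (abs_of_pos (by positivity))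
    have h2 : |Real.sin (ξ * y)| / (ξ * D) ≤ y := by
      rw [div_le_iff₀ (by positivity)]
      nlinarith [mul_le_mul_of_nonneg_left hD1 (mul_pos hξ hy).le]
    exact (mul_le_of_le_one_right (by positivity) hexp_le_one).trans h2
  · have h1 : |Real.sin (ξ * y)| ≤ 1 := Real.abs_sin_le_one _
    have hkey : c * ξ ^ 2 / D * Real.exp (-(c * ξ ^ 2) / D) ≤ 1 := by
      rw [show -(c * ξ ^ 2) / D = -(c * ξ ^ 2 / D) by ring, Real.exp_neg,
        ← div_eq_mul_inv, div_le_one (Real.exp_pos _)]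
      linarith [Real.add_one_le_exp (c * ξ ^ 2 / D)]
    calc |Real.sin (ξ * y)| / (ξ * D) * Real.exp (-(c * ξ ^ 2) / D)
        ≤ 1 / (ξ * D) * Real.exp (-(c * ξ ^ 2) / D) := by gcongr
      _ = 1 / (c * ξ ^ 3) * (c * ξ ^ 2 / D * Real.exp (-(c * ξ ^ 2) / D)) := by
          field_simp
      _ ≤ 1 / (c * ξ ^ 3) := mul_le_of_le_one_right (by positivity) hkey

lemma h_integrable' {c y : ℝ} (hc : 0 < c) (hy : 0 < y) :
    IntegrableOn (fun ξ : ℝ => min y (1 / (c * ξ ^ 3))) (Ioi (0:ℝ)) := by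
  have hmeas : ∀ s : Set ℝ, AEStronglyMeasurable (fun ξ : ℝ => min y (1 / (c * ξ ^ 3)))
      (volume.restrict s) := fun s => by
    apply Measurable.aestronglyMeasurable
    exact measurable_const.min (measurable_const.div ((measurable_id.pow_const 3).const_mul c))
  have hunion : Ioi (0:ℝ) = Ioc 0 1 ∪ Ioi 1 := (Ioc_union_Ioi_eq_Ioi zero_le_one).symm
  rw [hunion]
  apply IntegrableOn.union
  · refine Integrable.mono' (g := fun _ => y) ((integrableOn_const_iff).mpr (Or.inr measure_Ioc_lt_top))
      (hmeas _) (ae_restrict_of_forall_mem measurableSet_Ioc fun ξ hξ => ?_)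
    have hξ0 : 0 < ξ := hξ.1
    rw [Real.norm_eq_abs, _root_.abs_of_nonneg (le_min hy.le (by positivity))]
    exact min_le_left _ _
  · refine Integrable.mono' (g := fun ξ : ℝ => c⁻¹ * ξ ^ (-3:ℝ)) ?_
      (hmeas _) (ae_restrict_of_forall_mem measurableSet_Ioi fun ξ hξ => ?_)
    · exact (integrableOn_Ioi_rpow_of_lt (by norm_num) one_pos).const_mul _
    · have hξ1 : (1:ℝ) < ξ := hξ
      have hξ0 : (0:ℝ) < ξ := lt_trans one_pos hξ1
      show ‖min y (1 / (c * ξ ^ 3))‖ ≤ c⁻¹ * ξ ^ ((-3:ℝ))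
      rw [Real.norm_eq_abs, _root_.abs_of_nonneg (le_min hy.le (by positivity)),
        Real.rpow_neg hξ0.le, show (3:ℝ) = ((3:ℕ):ℝ) by norm_num, Real.rpow_natCast]
      calc min y (1 / (c * ξ ^ 3)) ≤ 1 / (c * ξ ^ 3) := min_le_right _ _
        _ = c⁻¹ * (ξ ^ 3)⁻¹ := by field_simp

end Helpers

/-- The complementary error function `erfc(x) = (2/√π) ∫ₓ^∞ e^{−s²} ds`. -/
noncomputable def erfc (x : ℝ) : ℝ := (2 / Real.sqrt Real.pi) * ∫ s in Set.Ioi x, Real.exp (-s ^ 2)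

section Erfc
open Set

lemma gauss_int' : IntegrableOn (fun σ : ℝ => Real.exp (-σ ^ 2)) (Ioi (0:ℝ)) := by
  have := (integrable_exp_neg_mul_sq (one_pos)).integrableOn (s := Ioi (0:ℝ))
  simpa using this

lemma erfc_eq' {x : ℝ} (hx : 0 < x) :
    1 - 2 / π * (Real.sqrt π * ∫ σ in (0:ℝ)..x, Real.exp (-σ ^ 2)) = erfc x := by
  have hga : (∫ σ in Ioi (0:ℝ), Real.exp (-σ ^ 2)) = Real.sqrt π / 2 := by
    have := integral_gaussian_Ioi 1
    simpa using this
  have hsplit : (∫ σ in Ioc (0:ℝ) x, Real.exp (-σ ^ 2)) + (∫ σ in Ioi x, Real.exp (-σ ^ 2))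
      = ∫ σ in Ioi (0:ℝ), Real.exp (-σ ^ 2) := by
    rw [← setIntegral_union (Ioc_disjoint_Ioi le_rfl) measurableSet_Ioi
      (gauss_int'.mono_set Ioc_subset_Ioi_self) (gauss_int'.mono_set (Ioi_subset_Ioi hx.le)),
      Ioc_union_Ioi_eq_Ioi hx.le]
  rw [intervalIntegral.integral_of_le hx.le]
  rw [erfc]
  have hπ : (0:ℝ) < Real.sqrt π := Real.sqrt_pos.mpr Real.pi_pos
  have hππ : Real.sqrt π * Real.sqrt π = π := Real.mul_self_sqrt Real.pi_pos.le
  field_simp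
  linear_combination (-2 * (∫ σ in Ioc (0:ℝ) x, Real.exp (-σ ^ 2))) * hππ +
    (-2 * π) * hsplit + (-2 * π) * hga

end Erfc

/-- Newtonian limit: as the second-grade parameter `α → 0⁺`, the Fourier sine transform
solution `u_α` of Stokes' first problem for the second-grade fluid tends, at each fixed
`y > 0`, `t > 0`, to Stokes' classical solution `U₀ erfc(y/(2√(νt)))`.  The integrals over
`(0,∞)` are improper, i.e. limits of `∫₀ᴿ` as `R → ∞`. -/
theorem stmt9 (ν U₀ : ℝ) (hν : 0 < ν) (I₁ I₂ u : ℝ → ℝ → ℝ → ℝ)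
    (hI₁ : ∀ α y t : ℝ, 0 < α → 0 < y → 0 < t →
      Tendsto (fun R => ∫ ξ in (0:ℝ)..R,
          (Real.sin (ξ * y) / ξ) * Real.exp (-(ν * ξ ^ 2 * t) / (1 + α * ξ ^ 2)))
        atTop (nhds (I₁ α y t)))
    (hI₂ : ∀ α y t : ℝ, 0 < α → 0 < y → 0 < t →
      Tendsto (fun R => ∫ ξ in (0:ℝ)..R,
          (ξ * Real.sin (ξ * y) / (1 + α * ξ ^ 2)) *
            Real.exp (-(ν * ξ ^ 2 * t) / (1 + α * ξ ^ 2)))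
        atTop (nhds (I₂ α y t)))
    (hu : ∀ α y t : ℝ, 0 < α → 0 < y → 0 < t →
      u α y t = U₀ * (1 - (2 / Real.pi) * I₁ α y t + (2 * α / Real.pi) * I₂ α y t)) :
    ∀ y t : ℝ, 0 < y → 0 < t →
      Tendsto (fun α => u α y t) (nhdsWithin 0 (Set.Ioi 0))
        (nhds (U₀ * erfc (y / (2 * Real.sqrt (ν * t))))) := by
  intro y t hy ht
  set c : ℝ := ν * t with hc_def
  have hc : 0 < c := mul_pos hν ht
  set g : ℝ → ℝ → ℝ := fun α ξ =>
    Real.sin (ξ * y) / (ξ * (1 + α * ξ ^ 2)) * Real.exp (-(c * ξ ^ 2) / (1 + α * ξ ^ 2)) with hg_def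
  -- measurability
  have hmeas : ∀ α : ℝ, Measurable (g α) := by
    intro α
    apply Measurable.mul
    · exact (Real.measurable_sin.comp (measurable_id.mul_const y)).div
        (measurable_id.mul (measurable_const.add ((measurable_id.pow_const 2).const_mul α)))
    · exact Real.measurable_exp.comp
        ((((measurable_id.pow_const 2).const_mul c).neg).div
          (measurable_const.add ((measurable_id.pow_const 2).const_mul α)))
  -- integrability of g α for α > 0
  have hgint : ∀ α : ℝ, 0 < α → IntegrableOn (g α) (Set.Ioi (0:ℝ)) := by
    intro α hα
    refine Integrable.mono' (h_integrable' hc hy) ((hmeas α).aestronglyMeasurable)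
      (ae_restrict_of_forall_mem measurableSet_Ioi fun ξ hξ => ?_)
    exact g_bound' hc hy hα hξ
  -- identification of the improper integrals
  have hIdent : ∀ α : ℝ, 0 < α →
      I₁ α y t - α * I₂ α y t = ∫ ξ in Set.Ioi (0:ℝ), g α ξ := by
    intro α hα
    have hD0 : ∀ ξ : ℝ, (0:ℝ) < 1 + α * ξ ^ 2 := fun ξ => by nlinarith [sq_nonneg ξ]
    have T3 : Tendsto (fun R => (∫ ξ in (0:ℝ)..R,
          (Real.sin (ξ * y) / ξ) * Real.exp (-(ν * ξ ^ 2 * t) / (1 + α * ξ ^ 2)))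
        - α * ∫ ξ in (0:ℝ)..R,
          (ξ * Real.sin (ξ * y) / (1 + α * ξ ^ 2)) *
            Real.exp (-(ν * ξ ^ 2 * t) / (1 + α * ξ ^ 2)))
        atTop (nhds (I₁ α y t - α * I₂ α y t)) :=
      (hI₁ α y t hα hy ht).sub ((hI₂ α y t hα hy ht).const_mul α)
    have T4 : Tendsto (fun R => ∫ ξ in (0:ℝ)..R, g α ξ) atTop
        (nhds (∫ ξ in Set.Ioi (0:ℝ), g α ξ)) :=
      intervalIntegral_tendsto_integral_Ioi 0 (hgint α hα) tendsto_id
    have heq : (fun R => ∫ ξ in (0:ℝ)..R, g α ξ)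
        =ᶠ[atTop] (fun R => (∫ ξ in (0:ℝ)..R,
          (Real.sin (ξ * y) / ξ) * Real.exp (-(ν * ξ ^ 2 * t) / (1 + α * ξ ^ 2)))
        - α * ∫ ξ in (0:ℝ)..R,
          (ξ * Real.sin (ξ * y) / (1 + α * ξ ^ 2)) *
            Real.exp (-(ν * ξ ^ 2 * t) / (1 + α * ξ ^ 2))) := by
      filter_upwards [eventually_ge_atTop (0:ℝ)] with R hR
      have if₁ : IntegrableOn (fun ξ =>
          (Real.sin (ξ * y) / ξ) * Real.exp (-(ν * ξ ^ 2 * t) / (1 + α * ξ ^ 2)))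
          (Set.Ioc 0 R) := by
        refine Integrable.mono' (g := fun _ => y)
          ((integrableOn_const_iff).mpr (Or.inr measure_Ioc_lt_top))
          (Measurable.aestronglyMeasurable ?_)
          (ae_restrict_of_forall_mem measurableSet_Ioc fun ξ hξ => ?_)
        · exact ((Real.measurable_sin.comp (measurable_id.mul_const y)).div measurable_id).mul
            (Real.measurable_exp.comp
              ((((measurable_id.pow_const 2).const_mul ν |>.mul_const t).neg).div
                (measurable_const.add ((measurable_id.pow_const 2).const_mul α))))
        · have hξ0 : (0:ℝ) < ξ := hξ.1
          have h1 : |Real.sin (ξ * y)| ≤ ξ * y :=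
            (Real.abs_sin_le_abs).trans_eq (abs_of_pos (by positivity))
          have hE1 : Real.exp (-(ν * ξ ^ 2 * t) / (1 + α * ξ ^ 2)) ≤ 1 := by
            apply Real.exp_le_one_iff.mpr
            apply div_nonpos_of_nonpos_of_nonneg _ (hD0 ξ).le
            nlinarith
          rw [Real.norm_eq_abs, abs_mul, abs_div, abs_of_pos hξ0,
            abs_of_pos (Real.exp_pos _)]
          have h2 : |Real.sin (ξ * y)| / ξ ≤ y := by
            rw [div_le_iff₀ hξ0]
            nlinarith
          exact (mul_le_of_le_one_right (by positivity) hE1).trans h2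
      have if₂ : IntegrableOn (fun ξ =>
          (ξ * Real.sin (ξ * y) / (1 + α * ξ ^ 2)) *
            Real.exp (-(ν * ξ ^ 2 * t) / (1 + α * ξ ^ 2)))
          (Set.Ioc 0 R) := by
        refine Integrable.mono' (g := fun _ => R)
          ((integrableOn_const_iff).mpr (Or.inr measure_Ioc_lt_top))
          (Measurable.aestronglyMeasurable ?_)
          (ae_restrict_of_forall_mem measurableSet_Ioc fun ξ hξ => ?_)
        · exact ((measurable_id.mul (Real.measurable_sin.comp (measurable_id.mul_const y))).div
            (measurable_const.add ((measurable_id.pow_const 2).const_mul α))).mul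
            (Real.measurable_exp.comp
              ((((measurable_id.pow_const 2).const_mul ν |>.mul_const t).neg).div
                (measurable_const.add ((measurable_id.pow_const 2).const_mul α))))
        · have hξ0 : (0:ℝ) < ξ := hξ.1
          have hξR : ξ ≤ R := hξ.2
          have hD1 : (1:ℝ) ≤ 1 + α * ξ ^ 2 := by nlinarith
          have h1 : |Real.sin (ξ * y)| ≤ 1 := Real.abs_sin_le_one _
          have hE1 : Real.exp (-(ν * ξ ^ 2 * t) / (1 + α * ξ ^ 2)) ≤ 1 := by
            apply Real.exp_le_one_iff.mpr
            apply div_nonpos_of_nonpos_of_nonneg _ (hD0 ξ).le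
            nlinarith
          rw [Real.norm_eq_abs, abs_mul, abs_div, abs_of_pos (hD0 ξ),
            abs_of_pos (Real.exp_pos _), abs_mul, abs_of_pos hξ0]
          have h2 : ξ * |Real.sin (ξ * y)| / (1 + α * ξ ^ 2) ≤ R := by
            rw [div_le_iff₀ (hD0 ξ)]
            nlinarith [abs_nonneg (Real.sin (ξ * y))]
          exact (mul_le_of_le_one_right (by positivity) hE1).trans h2
      rw [intervalIntegral.integral_of_le hR, intervalIntegral.integral_of_le hR,
        intervalIntegral.integral_of_le hR, ← integral_const_mul, ← integral_sub if₁ (if₂.const_mul α)]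
      refine setIntegral_congr_fun measurableSet_Ioc fun ξ hξ => ?_
      have hξ0 : (ξ:ℝ) ≠ 0 := ne_of_gt hξ.1
      have hDne : (1 + α * ξ ^ 2) ≠ 0 := ne_of_gt (hD0 ξ)
      have hee : -(ν * ξ ^ 2 * t) / (1 + α * ξ ^ 2) = -(c * ξ ^ 2) / (1 + α * ξ ^ 2) := by
        rw [hc_def]; ring_nf
      show g α ξ = _
      rw [hg_def]
      simp only
      rw [hee]
      field_simp
      ring
    exact (tendsto_nhds_unique (T4.congr' heq) T3).symm
  -- eventual formula for u
  have hform : ∀ᶠ α in nhdsWithin (0:ℝ) (Set.Ioi 0),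
      u α y t = U₀ * (1 - 2 / π * ∫ ξ in Set.Ioi (0:ℝ), g α ξ) := by
    filter_upwards [self_mem_nhdsWithin] with α hα
    rw [hu α y t hα hy ht, ← hIdent α hα]
    ring
  -- dominated convergence
  have hDCT : Tendsto (fun α => ∫ ξ in Set.Ioi (0:ℝ), g α ξ) (nhdsWithin 0 (Set.Ioi 0))
      (nhds (∫ ξ in Set.Ioi (0:ℝ), g 0 ξ)) := by
    refine tendsto_integral_filter_of_dominated_convergence (fun ξ => min y (1 / (c * ξ ^ 3)))
      ?_ ?_ (h_integrable' hc hy) ?_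
    · exact Eventually.of_forall fun α => (hmeas α).aestronglyMeasurable
    · filter_upwards [self_mem_nhdsWithin] with α hα
      exact ae_restrict_of_forall_mem measurableSet_Ioi fun ξ hξ => g_bound' hc hy hα hξ
    · refine ae_restrict_of_forall_mem measurableSet_Ioi fun ξ hξ => ?_
      have hξ0 : (ξ:ℝ) ≠ 0 := ne_of_gt hξ
      have hcont : ContinuousAt (fun α => g α ξ) 0 := by
        rw [hg_def]
        simp only
        apply ContinuousAt.mul
        · apply ContinuousAt.div continuousAt_const (by fun_prop)
          simp [hξ0]
        · apply Real.continuous_exp.continuousAt.comp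
          apply ContinuousAt.div continuousAt_const (by fun_prop)
          norm_num
      exact hcont.tendsto.mono_left nhdsWithin_le_nhds
  -- value of the limit integral
  have hval : (∫ ξ in Set.Ioi (0:ℝ), g 0 ξ)
      = Real.sqrt π * ∫ σ in (0:ℝ)..(y / (2 * Real.sqrt c)), Real.exp (-σ ^ 2) := by
    rw [← sine_gaussian_Ioi' hc hy]
    refine setIntegral_congr_fun measurableSet_Ioi fun ξ _ => ?_
    rw [hg_def]
    norm_num
  have hx0 : 0 < y / (2 * Real.sqrt c) := by positivity
  have hlim : Tendsto (fun α => U₀ * (1 - 2 / π * ∫ ξ in Set.Ioi (0:ℝ), g α ξ))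
      (nhdsWithin 0 (Set.Ioi 0))
      (nhds (U₀ * (1 - 2 / π * (Real.sqrt π *
        ∫ σ in (0:ℝ)..(y / (2 * Real.sqrt c)), Real.exp (-σ ^ 2))))) := by
    apply Tendsto.const_mul
    apply Tendsto.const_sub
    apply Tendsto.const_mul
    rw [← hval]
    exact hDCT
  rw [erfc_eq' hx0] at hlim
  exact hlim.congr' (hform.mono fun α hα => hα.symm)
end

section
/- Let ν > 0, α > 0, Δt > 0, Δy > 0, θ ∈ ℝ and g ∈ ℂ. Suppose the complex grid function 𝔲_j^n := g^n e^{ijθ} (j ∈ ℤ, n ∈ ℕ) satisfies, for all j ∈ ℤ and n ∈ ℕ, the difference scheme (𝔲_j^{n+1} − 𝔲_j^n)/Δt = (ν/Δy²)·(1/2)[(𝔲_{j+1}^{n+1} − 2𝔲_j^{n+1} + 𝔲_{j−1}^{n+1}) + (𝔲_{j+1}^{n} − 2𝔲_j^{n} + 𝔲_{j−1}^{n})] + (α/(ΔtΔy²))[(𝔲_{j+1}^{n+1} − 2𝔲_j^{n+1} + 𝔲_{j−1}^{n+1}) − (𝔲_{j+1}^{n} − 2𝔲_j^{n} + 𝔲_{j−1}^{n})].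 Then |g| ≤ 1. Explicitly, g = (1 + αs − νΔt s/2)/(1 + αs + νΔt s/2) with s := (4/Δy²) sin²(θ/2), and this quotient has absolute value at most 1. -/
/-- Unconditional von Neumann stability of the Crank–Nicolson-type scheme for the
second-grade fluid equation: any Fourier mode `𝔲ⱼⁿ = gⁿ e^{ijθ}` satisfying the scheme has
amplification factor `g` of modulus at most one; explicitly
`g = (1 + αs − νΔt s/2)/(1 + αs + νΔt s/2)` with `s = (4/Δy²) sin²(θ/2)`, a quotient of
absolute value at most `1`. -/
theorem stmt14 (ν α Δt Δy θ s : ℝ) (hν : 0 < ν) (hα : 0 < α) (hΔt : 0 < Δt)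
    (hΔy : 0 < Δy) (hs : s = (4 / Δy ^ 2) * Real.sin (θ / 2) ^ 2)
    (g : ℂ) (𝔲 : ℤ → ℕ → ℂ)
    (h𝔲 : ∀ (j : ℤ) (n : ℕ), 𝔲 j n = g ^ n * Complex.exp (Complex.I * (j : ℂ) * (θ : ℂ)))
    (hscheme : ∀ (j : ℤ) (n : ℕ),
      (𝔲 j (n + 1) - 𝔲 j n) / (Δt : ℂ) =
        ((ν : ℂ) / (Δy : ℂ) ^ 2) * (1 / 2) *
            ((𝔲 (j + 1) (n + 1) - 2 * 𝔲 j (n + 1) + 𝔲 (j - 1) (n + 1)) +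
              (𝔲 (j + 1) n - 2 * 𝔲 j n + 𝔲 (j - 1) n)) +
          ((α : ℂ) / ((Δt : ℂ) * (Δy : ℂ) ^ 2)) *
            ((𝔲 (j + 1) (n + 1) - 2 * 𝔲 j (n + 1) + 𝔲 (j - 1) (n + 1)) -
              (𝔲 (j + 1) n - 2 * 𝔲 j n + 𝔲 (j - 1) n))) :
    ‖g‖ ≤ 1 ∧
    g = (((1 + α * s - ν * Δt * s / 2) / (1 + α * s + ν * Δt * s / 2) : ℝ) : ℂ) ∧
    |(1 + α * s - ν * Δt * s / 2) / (1 + α * s + ν * Δt * s / 2)| ≤ 1 := by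
  have hsnn : 0 ≤ s := by rw [hs]; positivity
  have hDpos : 0 < 1 + α * s + ν * Δt * s / 2 := by
    have := mul_nonneg hα.le hsnn
    have := mul_nonneg (mul_nonneg hν.le hΔt.le) hsnn
    nlinarith
  have habs : |(1 + α * s - ν * Δt * s / 2) / (1 + α * s + ν * Δt * s / 2)| ≤ 1 := by
    rw [abs_div, abs_of_pos hDpos, div_le_one hDpos, abs_le]
    constructor
    · nlinarith [mul_nonneg hα.le hsnn]
    · nlinarith [mul_nonneg (mul_nonneg hν.le hΔt.le) hsnn]
  -- exp sum identity
  have hsum : Complex.exp (Complex.I * (θ:ℂ)) +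
      Complex.exp (-(Complex.I * (θ:ℂ))) = ((2 - Δy^2 * s : ℝ) : ℂ) := by
    rw [show Complex.I * (θ:ℂ) = (θ:ℂ) * Complex.I by ring,
        show -((θ:ℂ) * Complex.I) = (-θ:ℝ) * Complex.I by push_cast; ring,
        Complex.exp_mul_I, Complex.exp_mul_I]
    rw [← Complex.ofReal_cos, ← Complex.ofReal_sin, ← Complex.ofReal_cos, ← Complex.ofReal_sin,
        Real.cos_neg, Real.sin_neg]
    have h2 : Real.cos θ = 1 - 2 * Real.sin (θ/2)^2 := by
      have h := Real.sin_sq_eq_half_sub (θ/2)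
      rw [show 2*(θ/2)=θ by ring] at h
      linarith
    have h3 : Δy^2 * s = 4 * Real.sin (θ/2)^2 := by
      rw [hs]; field_simp
    rw [h3, h2]
    push_cast
    ring
  have heq := hscheme 0 0
  simp only [h𝔲] at heq
  norm_num at heq
  set x := Complex.exp (Complex.I * (θ:ℂ)) with hx
  set y := Complex.exp (-(Complex.I * (θ:ℂ))) with hy
  have hy2 : y = ((2 - Δy^2*s : ℝ):ℂ) - x := by
    rw [← hsum]; ring
  rw [hy2] at heq
  have hΔtC : (Δt:ℂ) ≠ 0 := by exact_mod_cast hΔt.ne'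
  have hΔyC : (Δy:ℂ) ≠ 0 := by exact_mod_cast hΔy.ne'
  field_simp at heq
  have h2 : ((2:ℂ)*(Δt:ℂ)*(Δy:ℂ)^4) ≠ 0 := by
    simp [hΔtC, hΔyC]
  have hg : g * (((1 + α * s + ν * Δt * s / 2 : ℝ)) : ℂ) =
      (((1 + α * s - ν * Δt * s / 2 : ℝ)) : ℂ) := by
    apply mul_right_cancel₀ h2
    push_cast
    push_cast at heq
    linear_combination (↑Δt * ↑Δy ^ 2 : ℂ) * heq
  have hDC : (((1 + α * s + ν * Δt * s / 2 : ℝ)) : ℂ) ≠ 0 := by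
    exact_mod_cast hDpos.ne'
  have hgeq : g = (((1 + α * s - ν * Δt * s / 2) / (1 + α * s + ν * Δt * s / 2) : ℝ) : ℂ) := by
    rw [Complex.ofReal_div, eq_div_iff hDC]
    exact hg
  refine ⟨?_, hgeq, habs⟩
  rw [hgeq, Complex.norm_real, Real.norm_eq_abs]
  exact habs
end

section
/- Let ν > 0, α > 0, L > 0, T > 0, and let u : ℝ × ℝ → ℝ have continuous partial derivatives ∂_t^a ∂_y^b u for all a ≤ 3 and b ≤ 4 that are bounded on an open set containing [0,L] × [0,T], and suppose u satisfies ∂u/∂t = ν ∂²u/∂y² + α ∂³u/∂t∂y² there. Then there exists C > 0 such that for all Δt, Δy ∈ (0,1] and all points (y,t) with [y−Δy, y+Δy] × [t, t+Δt] ⊆ [0,L] × [0,T], the truncation residual of the Crank–Nicolson-type scheme satisfies |(u(y,t+Δt) − u(y,t))/Δt − (ν/(2Δy²))[(u(y+Δy,t+Δt) − 2u(y,t+Δt) + u(y−Δy,t+Δt)) + (u(y+Δy,t) − 2u(y,t) + u(y−Δy,t))] − (α/(ΔtΔy²))[(u(y+Δy,t+Δt) − 2u(y,t+Δt) + u(y−Δy,t+Δt))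 − (u(y+Δy,t) − 2u(y,t) + u(y−Δy,t))]| ≤ C(Δt² + Δy²). -/
open Set

lemma polyBound (φ φ' : ℝ → ℝ) {a b K : ℝ} (n : ℕ) (hab : a ≤ b)
    (hd : ∀ x ∈ Set.Icc a b, HasDerivAt φ (φ' x) x)
    (h0 : φ a = 0)
    (hb : ∀ x ∈ Set.Icc a b, |φ' x| ≤ K * (x - a) ^ n) :
    |φ b| ≤ K * (b - a) ^ (n + 1) / (n + 1) := by
  have hcont : ContinuousOn φ (Set.Icc a b) :=
    fun x hx => (hd x hx).continuousAt.continuousWithinAt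
  have hB : ∀ x : ℝ, HasDerivAt (fun x => K * (x - a) ^ (n + 1) / (n + 1))
      (K * (x - a) ^ n) x := by
    intro x
    have h1 : HasDerivAt (fun x : ℝ => (x - a) ^ (n + 1))
        (((n + 1 : ℕ) : ℝ) * (x - a) ^ (n + 1 - 1) * 1) x :=
      ((hasDerivAt_id x).sub_const a).pow (n + 1)
    have h2 := (h1.const_mul K).div_const ((n : ℝ) + 1)
    refine h2.congr_deriv ?_
    have hn : ((n : ℝ) + 1) ≠ 0 := by positivity
    push_cast
    field_simp
  have key := image_norm_le_of_norm_deriv_right_le_deriv_boundary hcont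
    (fun x hx => (hd x (Set.mem_Icc_of_Ico hx)).hasDerivWithinAt)
    (by simp [h0]) hB
    (fun x hx => by simpa [Real.norm_eq_abs] using hb x (Set.mem_Icc_of_Ico hx))
    (Set.right_mem_Icc.2 hab)
  simpa [Real.norm_eq_abs] using key

lemma mvtBound (f f1 : ℝ → ℝ) {a b M : ℝ} (hab : a ≤ b)
    (h1 : ∀ x ∈ Set.Icc a b, HasDerivAt f (f1 x) x)
    (hM : ∀ x ∈ Set.Icc a b, |f1 x| ≤ M) :
    |f b - f a| ≤ M * (b - a) := by
  have h := polyBound (fun x => f x - f a) f1 0 hab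
    (fun x hx => (h1 x hx).sub_const _) (by simp)
    (fun x hx => by simpa using hM x hx)
  simpa using h

lemma taylor1Bound (f f1 f2 : ℝ → ℝ) {a b M : ℝ} (hab : a ≤ b)
    (h1 : ∀ x ∈ Set.Icc a b, HasDerivAt f (f1 x) x)
    (h2 : ∀ x ∈ Set.Icc a b, HasDerivAt f1 (f2 x) x)
    (hM : ∀ x ∈ Set.Icc a b, |f2 x| ≤ M) :
    |f b - f a - f1 a * (b - a)| ≤ M * (b - a) ^ 2 / 2 := by
  have hd : ∀ x ∈ Set.Icc a b,
      HasDerivAt (fun x => f x - f a - f1 a * (x - a)) (f1 x - f1 a) x := by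
    intro x hx
    have h := ((h1 x hx).sub_const (f a)).sub
      (((hasDerivAt_id x).sub_const a).const_mul (f1 a))
    exact h.congr_deriv (by ring)
  have hb : ∀ x ∈ Set.Icc a b, |f1 x - f1 a| ≤ M * (x - a) ^ 1 := by
    intro x hx
    have hsub : Set.Icc a x ⊆ Set.Icc a b := Set.Icc_subset_Icc le_rfl hx.2
    have h := mvtBound f1 f2 hx.1 (fun z hz => h2 z (hsub hz)) (fun z hz => hM z (hsub hz))
    simpa using h
  have h := polyBound _ _ 1 hab hd (by simp) hb
  norm_num at h
  linarith

lemma taylor2Bound (f f1 f2 f3 : ℝ → ℝ) {a b M : ℝ} (hab : a ≤ b)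
    (h1 : ∀ x ∈ Set.Icc a b, HasDerivAt f (f1 x) x)
    (h2 : ∀ x ∈ Set.Icc a b, HasDerivAt f1 (f2 x) x)
    (h3 : ∀ x ∈ Set.Icc a b, HasDerivAt f2 (f3 x) x)
    (hM : ∀ x ∈ Set.Icc a b, |f3 x| ≤ M) :
    |f b - f a - f1 a * (b - a) - f2 a * (b - a) ^ 2 / 2| ≤ M * (b - a) ^ 3 / 6 := by
  have hd : ∀ x ∈ Set.Icc a b,
      HasDerivAt (fun x => f x - f a - f1 a * (x - a) - f2 a * (x - a) ^ 2 / 2)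
        (f1 x - f1 a - f2 a * (x - a)) x := by
    intro x hx
    have h := (((h1 x hx).sub_const (f a)).sub
      (((hasDerivAt_id x).sub_const a).const_mul (f1 a))).sub
      (((((hasDerivAt_id x).sub_const a).pow 2).const_mul (f2 a)).div_const 2)
    simp only [id_eq] at h
    refine h.congr_deriv ?_
    push_cast
    ring
  have hb : ∀ x ∈ Set.Icc a b, |f1 x - f1 a - f2 a * (x - a)| ≤ M / 2 * (x - a) ^ 2 := by
    intro x hx
    have hsub : Set.Icc a x ⊆ Set.Icc a b := Set.Icc_subset_Icc le_rfl hx.2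
    have h := taylor1Bound f1 f2 f3 hx.1 (fun z hz => h2 z (hsub hz))
      (fun z hz => h3 z (hsub hz)) (fun z hz => hM z (hsub hz))
    linarith
  have h := polyBound _ _ 2 hab hd (by simp) hb
  norm_num at h
  linarith

lemma taylor3Bound (f f1 f2 f3 f4 : ℝ → ℝ) {a b M : ℝ} (hab : a ≤ b)
    (h1 : ∀ x ∈ Set.Icc a b, HasDerivAt f (f1 x) x)
    (h2 : ∀ x ∈ Set.Icc a b, HasDerivAt f1 (f2 x) x)
    (h3 : ∀ x ∈ Set.Icc a b, HasDerivAt f2 (f3 x) x)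
    (h4 : ∀ x ∈ Set.Icc a b, HasDerivAt f3 (f4 x) x)
    (hM : ∀ x ∈ Set.Icc a b, |f4 x| ≤ M) :
    |f b - f a - f1 a * (b - a) - f2 a * (b - a) ^ 2 / 2 - f3 a * (b - a) ^ 3 / 6| ≤
      M * (b - a) ^ 4 / 24 := by
  have hd : ∀ x ∈ Set.Icc a b,
      HasDerivAt (fun x => f x - f a - f1 a * (x - a) - f2 a * (x - a) ^ 2 / 2
          - f3 a * (x - a) ^ 3 / 6)
        (f1 x - f1 a - f2 a * (x - a) - f3 a * (x - a) ^ 2 / 2) x := by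
    intro x hx
    have h := ((((h1 x hx).sub_const (f a)).sub
      (((hasDerivAt_id x).sub_const a).const_mul (f1 a))).sub
      (((((hasDerivAt_id x).sub_const a).pow 2).const_mul (f2 a)).div_const 2)).sub
      (((((hasDerivAt_id x).sub_const a).pow 3).const_mul (f3 a)).div_const 6)
    simp only [id_eq] at h
    refine h.congr_deriv ?_
    push_cast
    ring
  have hb : ∀ x ∈ Set.Icc a b,
      |f1 x - f1 a - f2 a * (x - a) - f3 a * (x - a) ^ 2 / 2| ≤ M / 6 * (x - a) ^ 3 := by
    intro x hx
    have hsub : Set.Icc a x ⊆ Set.Icc a b := Set.Icc_subset_Icc le_rfl hx.2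
    have h := taylor2Bound f1 f2 f3 f4 hx.1 (fun z hz => h2 z (hsub hz))
      (fun z hz => h3 z (hsub hz)) (fun z hz => h4 z (hsub hz)) (fun z hz => hM z (hsub hz))
    linarith
  have h := polyBound _ _ 3 hab hd (by simp) hb
  norm_num at h
  linarith

lemma secondDiffBound (F F1 F2 F3 F4 : ℝ → ℝ) {y Δy M : ℝ} (hΔy : 0 < Δy)
    (h1 : ∀ z ∈ Set.Icc (y - Δy) (y + Δy), HasDerivAt F (F1 z) z)
    (h2 : ∀ z ∈ Set.Icc (y - Δy) (y + Δy), HasDerivAt F1 (F2 z) z)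
    (h3 : ∀ z ∈ Set.Icc (y - Δy) (y + Δy), HasDerivAt F2 (F3 z) z)
    (h4 : ∀ z ∈ Set.Icc (y - Δy) (y + Δy), HasDerivAt F3 (F4 z) z)
    (hM : ∀ z ∈ Set.Icc (y - Δy) (y + Δy), |F4 z| ≤ M) :
    |F (y + Δy) - 2 * F y + F (y - Δy) - F2 y * Δy ^ 2| ≤ M * Δy ^ 4 / 12 := by
  have hyb : y ≤ y + Δy := by linarith
  have hsubR : Set.Icc y (y + Δy) ⊆ Set.Icc (y - Δy) (y + Δy) :=
    Set.Icc_subset_Icc (by linarith) le_rfl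
  have hR := taylor3Bound F F1 F2 F3 F4 hyb
    (fun z hz => h1 z (hsubR hz)) (fun z hz => h2 z (hsubR hz))
    (fun z hz => h3 z (hsubR hz)) (fun z hz => h4 z (hsubR hz))
    (fun z hz => hM z (hsubR hz))
  have hmem : ∀ z ∈ Set.Icc y (y + Δy), 2 * y - z ∈ Set.Icc (y - Δy) (y + Δy) := by
    intro z hz
    exact ⟨by linarith [hz.2], by linarith [hz.1]⟩
  have hneg : ∀ z : ℝ, HasDerivAt (fun w : ℝ => 2 * y - w) (-1) z := by
    intro z
    exact ((hasDerivAt_const z (2 * y)).sub (hasDerivAt_id z)).congr_deriv (by ring)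
  have hG1 : ∀ z ∈ Set.Icc y (y + Δy),
      HasDerivAt (fun w => F (2 * y - w)) (-F1 (2 * y - z)) z := by
    intro z hz
    have h := HasDerivAt.comp z (h1 _ (hmem z hz)) (hneg z)
    simpa [Function.comp_def, mul_neg_one] using h
  have hG2 : ∀ z ∈ Set.Icc y (y + Δy),
      HasDerivAt (fun w => -F1 (2 * y - w)) (F2 (2 * y - z)) z := by
    intro z hz
    have h := (HasDerivAt.comp z (h2 _ (hmem z hz)) (hneg z)).neg
    exact h.congr_deriv (by ring)
  have hG3 : ∀ z ∈ Set.Icc y (y + Δy),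
      HasDerivAt (fun w => F2 (2 * y - w)) (-F3 (2 * y - z)) z := by
    intro z hz
    have h := HasDerivAt.comp z (h3 _ (hmem z hz)) (hneg z)
    simpa [Function.comp_def, mul_neg_one] using h
  have hG4 : ∀ z ∈ Set.Icc y (y + Δy),
      HasDerivAt (fun w => -F3 (2 * y - w)) (F4 (2 * y - z)) z := by
    intro z hz
    have h := (HasDerivAt.comp z (h4 _ (hmem z hz)) (hneg z)).neg
    exact h.congr_deriv (by ring)
  have hL := taylor3Bound (fun w => F (2 * y - w)) (fun w => -F1 (2 * y - w))
    (fun w => F2 (2 * y - w)) (fun w => -F3 (2 * y - w)) (fun w => F4 (2 * y - w)) hyb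
    hG1 hG2 hG3 hG4 (fun z hz => hM _ (hmem z hz))
  rw [show 2 * y - (y + Δy) = y - Δy from by ring, show 2 * y - y = y from by ring] at hL
  rw [show y + Δy - y = Δy from by ring] at hR hL
  have key : F (y + Δy) - 2 * F y + F (y - Δy) - F2 y * Δy ^ 2 =
      (F (y + Δy) - F y - F1 y * Δy - F2 y * Δy ^ 2 / 2 - F3 y * Δy ^ 3 / 6) +
      (F (y - Δy) - F y - (-F1 y) * Δy - F2 y * Δy ^ 2 / 2 - (-F3 y) * Δy ^ 3 / 6) := by
    ring
  rw [key]
  calc |_ + _| ≤ _ + _ := abs_add_le _ _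
    _ ≤ M * Δy ^ 4 / 12 := by linarith
set_option maxHeartbeats 2000000 in
/-- Second-order accuracy (truncation error `O(Δt² + Δy²)`) of the Crank–Nicolson-type
discretization of the second-grade fluid equation `∂u/∂t = ν ∂²u/∂y² + α ∂³u/∂t∂y²`.
Here `D a b` denotes the iterated partial derivative `∂ₜᵃ ∂_yᵇ u`, assumed to exist, be
continuous and bounded on an open set `V` containing `[0,L] × [0,T]` for all `a ≤ 3`,
`b ≤ 4`. -/
theorem stmt15 (ν α L T : ℝ) (hν : 0 < ν) (hα : 0 < α) (hL : 0 < L) (hT : 0 < T)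
    (u : ℝ × ℝ → ℝ) (V : Set (ℝ × ℝ)) (hV : IsOpen V)
    (hVsub : Set.Icc (0:ℝ) L ×ˢ Set.Icc (0:ℝ) T ⊆ V)
    (D : ℕ → ℕ → ℝ → ℝ → ℝ)
    (hD00 : ∀ y t : ℝ, D 0 0 y t = u (y, t))
    (hDy : ∀ b : ℕ, b < 4 → ∀ y t : ℝ, (y, t) ∈ V →
      HasDerivAt (fun z => D 0 b z t) (D 0 (b + 1) y t) y)
    (hDt : ∀ a : ℕ, a < 3 → ∀ b : ℕ, b ≤ 4 → ∀ y t : ℝ, (y, t) ∈ V →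
      HasDerivAt (fun τ => D a b y τ) (D (a + 1) b y t) t)
    (hcont : ∀ a : ℕ, a ≤ 3 → ∀ b : ℕ, b ≤ 4 →
      ContinuousOn (fun p : ℝ × ℝ => D a b p.1 p.2) V)
    (hbdd : ∀ a : ℕ, a ≤ 3 → ∀ b : ℕ, b ≤ 4 → ∃ M : ℝ, ∀ p ∈ V, |D a b p.1 p.2| ≤ M)
    (hpde : ∀ y t : ℝ, (y, t) ∈ V → D 1 0 y t = ν * D 0 2 y t + α * D 1 2 y t) :
    ∃ C > 0, ∀ Δt Δy : ℝ, Δt ∈ Set.Ioc (0:ℝ) 1 → Δy ∈ Set.Ioc (0:ℝ) 1 →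
      ∀ y t : ℝ,
        Set.Icc (y - Δy) (y + Δy) ×ˢ Set.Icc t (t + Δt) ⊆
          Set.Icc (0:ℝ) L ×ˢ Set.Icc (0:ℝ) T →
        |(u (y, t + Δt) - u (y, t)) / Δt -
            (ν / (2 * Δy ^ 2)) *
              ((u (y + Δy, t + Δt) - 2 * u (y, t + Δt) + u (y - Δy, t + Δt)) +
                (u (y + Δy, t) - 2 * u (y, t) + u (y - Δy, t))) -
            (α / (Δt * Δy ^ 2)) *
              ((u (y + Δy, t + Δt) - 2 * u (y, t + Δt) + u (y - Δy, t + Δt)) -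
                (u (y + Δy, t) - 2 * u (y, t) + u (y - Δy, t)))| ≤
          C * (Δt ^ 2 + Δy ^ 2) := by
  obtain ⟨M30, hM30'⟩ := hbdd 3 le_rfl 0 (by norm_num)
  obtain ⟨M22, hM22'⟩ := hbdd 2 (by norm_num) 2 (by norm_num)
  obtain ⟨M32, hM32'⟩ := hbdd 3 le_rfl 2 (by norm_num)
  obtain ⟨M04, hM04'⟩ := hbdd 0 (by norm_num) 4 le_rfl
  obtain ⟨M14, hM14'⟩ := hbdd 1 (by norm_num) 4 le_rfl
  set K30 := max M30 0 with hK30def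
  set K22 := max M22 0 with hK22def
  set K32 := max M32 0 with hK32def
  set K04 := max M04 0 with hK04def
  set K14 := max M14 0 with hK14def
  have hK30 : ∀ p ∈ V, |D 3 0 p.1 p.2| ≤ K30 := fun p hp => (hM30' p hp).trans (le_max_left _ _)
  have hK22 : ∀ p ∈ V, |D 2 2 p.1 p.2| ≤ K22 := fun p hp => (hM22' p hp).trans (le_max_left _ _)
  have hK32 : ∀ p ∈ V, |D 3 2 p.1 p.2| ≤ K32 := fun p hp => (hM32' p hp).trans (le_max_left _ _)
  have hK04 : ∀ p ∈ V, |D 0 4 p.1 p.2| ≤ K04 := fun p hp => (hM04' p hp).trans (le_max_left _ _)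
  have hK14 : ∀ p ∈ V, |D 1 4 p.1 p.2| ≤ K14 := fun p hp => (hM14' p hp).trans (le_max_left _ _)
  have hK30n : (0:ℝ) ≤ K30 := le_max_right _ _
  have hK22n : (0:ℝ) ≤ K22 := le_max_right _ _
  have hK32n : (0:ℝ) ≤ K32 := le_max_right _ _
  have hK04n : (0:ℝ) ≤ K04 := le_max_right _ _
  have hK14n : (0:ℝ) ≤ K14 := le_max_right _ _
  refine ⟨K30 / 6 + ν * K22 / 4 + α * K32 / 6 + ν * K04 / 12 + α * K14 / 12 + 1,
    by positivity, ?_⟩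
  intro Δt Δy hΔt hΔy y t hsub
  obtain ⟨ht0, ht1'⟩ := hΔt
  obtain ⟨hy0, hy1'⟩ := hΔy
  have hΔtne : Δt ≠ 0 := ne_of_gt ht0
  have hΔyne : Δy ≠ 0 := ne_of_gt hy0
  have hVmem : ∀ z s : ℝ, z ∈ Set.Icc (y - Δy) (y + Δy) → s ∈ Set.Icc t (t + Δt) →
      (z, s) ∈ V := fun z s hz hs => hVsub (hsub ⟨hz, hs⟩)
  have hyI : y ∈ Set.Icc (y - Δy) (y + Δy) := ⟨by linarith, by linarith⟩
  have htI : t ∈ Set.Icc t (t + Δt) := ⟨le_refl t, by linarith⟩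
  have ht1I : t + Δt ∈ Set.Icc t (t + Δt) := ⟨by linarith, le_refl _⟩
  have htle : t ≤ t + Δt := by linarith
  have hVt : ∀ s ∈ Set.Icc t (t + Δt), (y, s) ∈ V := fun s hs => hVmem y s hyI hs
  -- time expansions at y
  have E1 := taylor2Bound (fun s => D 0 0 y s) (fun s => D 1 0 y s) (fun s => D 2 0 y s)
      (fun s => D 3 0 y s) htle
      (fun s hs => hDt 0 (by norm_num) 0 (by norm_num) y s (hVt s hs))
      (fun s hs => hDt 1 (by norm_num) 0 (by norm_num) y s (hVt s hs))
      (fun s hs => hDt 2 (by norm_num) 0 (by norm_num) y s (hVt s hs))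
      (fun s hs => hK30 (y, s) (hVt s hs))
  have E2 := taylor1Bound (fun s => D 0 2 y s) (fun s => D 1 2 y s) (fun s => D 2 2 y s) htle
      (fun s hs => hDt 0 (by norm_num) 2 (by norm_num) y s (hVt s hs))
      (fun s hs => hDt 1 (by norm_num) 2 (by norm_num) y s (hVt s hs))
      (fun s hs => hK22 (y, s) (hVt s hs))
  have E3 := taylor2Bound (fun s => D 0 2 y s) (fun s => D 1 2 y s) (fun s => D 2 2 y s)
      (fun s => D 3 2 y s) htle
      (fun s hs => hDt 0 (by norm_num) 2 (by norm_num) y s (hVt s hs))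
      (fun s hs => hDt 1 (by norm_num) 2 (by norm_num) y s (hVt s hs))
      (fun s hs => hDt 2 (by norm_num) 2 (by norm_num) y s (hVt s hs))
      (fun s hs => hK32 (y, s) (hVt s hs))
  rw [show t + Δt - t = Δt from by ring] at E1 E2 E3
  -- spatial expansions
  have E4 := secondDiffBound (fun z => D 0 0 z (t + Δt)) (fun z => D 0 1 z (t + Δt))
      (fun z => D 0 2 z (t + Δt)) (fun z => D 0 3 z (t + Δt)) (fun z => D 0 4 z (t + Δt)) hy0
      (fun z hz => hDy 0 (by norm_num) z (t + Δt) (hVmem z (t + Δt) hz ht1I))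
      (fun z hz => hDy 1 (by norm_num) z (t + Δt) (hVmem z (t + Δt) hz ht1I))
      (fun z hz => hDy 2 (by norm_num) z (t + Δt) (hVmem z (t + Δt) hz ht1I))
      (fun z hz => hDy 3 (by norm_num) z (t + Δt) (hVmem z (t + Δt) hz ht1I))
      (fun z hz => hK04 (z, t + Δt) (hVmem z (t + Δt) hz ht1I))
  have E5 := secondDiffBound (fun z => D 0 0 z t) (fun z => D 0 1 z t)
      (fun z => D 0 2 z t) (fun z => D 0 3 z t) (fun z => D 0 4 z t) hy0
      (fun z hz => hDy 0 (by norm_num) z t (hVmem z t hz htI))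
      (fun z hz => hDy 1 (by norm_num) z t (hVmem z t hz htI))
      (fun z hz => hDy 2 (by norm_num) z t (hVmem z t hz htI))
      (fun z hz => hDy 3 (by norm_num) z t (hVmem z t hz htI))
      (fun z hz => hK04 (z, t) (hVmem z t hz htI))
  have hw4 : ∀ z ∈ Set.Icc (y - Δy) (y + Δy),
      |D 0 4 z (t + Δt) - D 0 4 z t| ≤ K14 * Δt := by
    intro z hz
    have h := mvtBound (fun s => D 0 4 z s) (fun s => D 1 4 z s) htle
      (fun s hs => hDt 0 (by norm_num) 4 (by norm_num) z s (hVmem z s hz hs))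
      (fun s hs => hK14 (z, s) (hVmem z s hz hs))
    rw [show t + Δt - t = Δt from by ring] at h
    exact h
  have E6 := secondDiffBound (fun z => D 0 0 z (t + Δt) - D 0 0 z t)
      (fun z => D 0 1 z (t + Δt) - D 0 1 z t)
      (fun z => D 0 2 z (t + Δt) - D 0 2 z t)
      (fun z => D 0 3 z (t + Δt) - D 0 3 z t)
      (fun z => D 0 4 z (t + Δt) - D 0 4 z t) hy0
      (fun z hz => (hDy 0 (by norm_num) z (t + Δt) (hVmem z (t + Δt) hz ht1I)).sub
        (hDy 0 (by norm_num) z t (hVmem z t hz htI)))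
      (fun z hz => (hDy 1 (by norm_num) z (t + Δt) (hVmem z (t + Δt) hz ht1I)).sub
        (hDy 1 (by norm_num) z t (hVmem z t hz htI)))
      (fun z hz => (hDy 2 (by norm_num) z (t + Δt) (hVmem z (t + Δt) hz ht1I)).sub
        (hDy 2 (by norm_num) z t (hVmem z t hz htI)))
      (fun z hz => (hDy 3 (by norm_num) z (t + Δt) (hVmem z (t + Δt) hz ht1I)).sub
        (hDy 3 (by norm_num) z t (hVmem z t hz htI)))
      hw4
  beta_reduce at E1 E2 E3 E4 E5 E6
  -- PDE identities
  have hVyt : (y, t) ∈ V := hVmem y t hyI htI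
  have P1 : D 1 0 y t = ν * D 0 2 y t + α * D 1 2 y t := hpde y t hVyt
  have P2 : D 2 0 y t = ν * D 1 2 y t + α * D 2 2 y t := by
    have hopen : IsOpen {s : ℝ | (y, s) ∈ V} := hV.preimage (Continuous.prodMk_right y)
    have hmem : {s : ℝ | (y, s) ∈ V} ∈ nhds t := hopen.mem_nhds hVyt
    have heq : (fun s => D 1 0 y s) =ᶠ[nhds t] fun s => ν * D 0 2 y s + α * D 1 2 y s :=
      Filter.eventually_of_mem hmem fun s hs => hpde y s hs
    have hA := hDt 1 (by norm_num) 0 (by norm_num) y t hVyt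
    have hB := ((hDt 0 (by norm_num) 2 (by norm_num) y t hVyt).const_mul ν).add
      ((hDt 1 (by norm_num) 2 (by norm_num) y t hVyt).const_mul α)
    exact hA.unique (hB.congr_of_eventuallyEq heq)
  rw [P1, P2] at E1
  -- abbreviations
  set e1 := D 0 0 y (t + Δt) - D 0 0 y t - (ν * D 0 2 y t + α * D 1 2 y t) * Δt -
      (ν * D 1 2 y t + α * D 2 2 y t) * Δt ^ 2 / 2 with he1
  set e2 := D 0 2 y (t + Δt) - D 0 2 y t - D 1 2 y t * Δt with he2
  set e3 := D 0 2 y (t + Δt) - D 0 2 y t - D 1 2 y t * Δt - D 2 2 y t * Δt ^ 2 / 2 with he3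
  set e4 := D 0 0 (y + Δy) (t + Δt) - 2 * D 0 0 y (t + Δt) + D 0 0 (y - Δy) (t + Δt) -
      D 0 2 y (t + Δt) * Δy ^ 2 with he4
  set e5 := D 0 0 (y + Δy) t - 2 * D 0 0 y t + D 0 0 (y - Δy) t - D 0 2 y t * Δy ^ 2 with he5
  set e6 := (D 0 0 (y + Δy) (t + Δt) - D 0 0 (y + Δy) t) -
      2 * (D 0 0 y (t + Δt) - D 0 0 y t) +
      (D 0 0 (y - Δy) (t + Δt) - D 0 0 (y - Δy) t) -
      (D 0 2 y (t + Δt) - D 0 2 y t) * Δy ^ 2 with he6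
  simp only [← hD00]
  have hXeq : (D 0 0 y (t + Δt) - D 0 0 y t) / Δt -
      (ν / (2 * Δy ^ 2)) *
        ((D 0 0 (y + Δy) (t + Δt) - 2 * D 0 0 y (t + Δt) + D 0 0 (y - Δy) (t + Δt)) +
          (D 0 0 (y + Δy) t - 2 * D 0 0 y t + D 0 0 (y - Δy) t)) -
      (α / (Δt * Δy ^ 2)) *
        ((D 0 0 (y + Δy) (t + Δt) - 2 * D 0 0 y (t + Δt) + D 0 0 (y - Δy) (t + Δt)) -
          (D 0 0 (y + Δy) t - 2 * D 0 0 y t + D 0 0 (y - Δy) t)) =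
      e1 / Δt - ν / 2 * e2 - α / Δt * e3 - ν / (2 * Δy ^ 2) * (e4 + e5) -
        α / (Δt * Δy ^ 2) * e6 := by
    rw [he1, he2, he3, he4, he5, he6]
    field_simp
    ring
  rw [hXeq]
  have hT1 : |e1 / Δt| ≤ K30 / 6 * Δt ^ 2 := by
    rw [abs_div, abs_of_pos ht0, div_le_iff₀ ht0]
    calc |e1| ≤ K30 * Δt ^ 3 / 6 := E1
      _ = K30 / 6 * Δt ^ 2 * Δt := by ring
  have hT2 : |ν / 2 * e2| ≤ ν * K22 / 4 * Δt ^ 2 := by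
    rw [abs_mul, abs_of_pos (by positivity : (0:ℝ) < ν / 2)]
    calc ν / 2 * |e2| ≤ ν / 2 * (K22 * Δt ^ 2 / 2) :=
          mul_le_mul_of_nonneg_left E2 (by positivity)
      _ = ν * K22 / 4 * Δt ^ 2 := by ring
  have hT3 : |α / Δt * e3| ≤ α * K32 / 6 * Δt ^ 2 := by
    rw [abs_mul, abs_of_pos (by positivity : (0:ℝ) < α / Δt)]
    calc α / Δt * |e3| ≤ α / Δt * (K32 * Δt ^ 3 / 6) :=
          mul_le_mul_of_nonneg_left E3 (by positivity)
      _ = α * K32 / 6 * Δt ^ 2 := by field_simp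
  have hT4 : |ν / (2 * Δy ^ 2) * (e4 + e5)| ≤ ν * K04 / 12 * Δy ^ 2 := by
    rw [abs_mul, abs_of_pos (by positivity : (0:ℝ) < ν / (2 * Δy ^ 2))]
    have h45 : |e4 + e5| ≤ K04 * Δy ^ 4 / 6 := (abs_add_le _ _).trans (by linarith)
    calc ν / (2 * Δy ^ 2) * |e4 + e5| ≤ ν / (2 * Δy ^ 2) * (K04 * Δy ^ 4 / 6) :=
          mul_le_mul_of_nonneg_left h45 (by positivity)
      _ = ν * K04 / 12 * Δy ^ 2 := by field_simp; ring
  have hT5 : |α / (Δt * Δy ^ 2) * e6| ≤ α * K14 / 12 * Δy ^ 2 := by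
    rw [abs_mul, abs_of_pos (by positivity : (0:ℝ) < α / (Δt * Δy ^ 2))]
    calc α / (Δt * Δy ^ 2) * |e6| ≤ α / (Δt * Δy ^ 2) * (K14 * Δt * Δy ^ 4 / 12) :=
          mul_le_mul_of_nonneg_left E6 (by positivity)
      _ = α * K14 / 12 * Δy ^ 2 := by field_simp
  have tri : |e1 / Δt - ν / 2 * e2 - α / Δt * e3 - ν / (2 * Δy ^ 2) * (e4 + e5) -
      α / (Δt * Δy ^ 2) * e6| ≤
      |e1 / Δt| + |ν / 2 * e2| + |α / Δt * e3| + |ν / (2 * Δy ^ 2) * (e4 + e5)| +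
        |α / (Δt * Δy ^ 2) * e6| := by
    have a1 := abs_sub (e1 / Δt - ν / 2 * e2 - α / Δt * e3 - ν / (2 * Δy ^ 2) * (e4 + e5))
      (α / (Δt * Δy ^ 2) * e6)
    have a2 := abs_sub (e1 / Δt - ν / 2 * e2 - α / Δt * e3) (ν / (2 * Δy ^ 2) * (e4 + e5))
    have a3 := abs_sub (e1 / Δt - ν / 2 * e2) (α / Δt * e3)
    have a4 := abs_sub (e1 / Δt) (ν / 2 * e2)
    linarith
  have q1 : (0:ℝ) ≤ (ν * K04 / 12 + α * K14 / 12 + 1) * Δt ^ 2 := by positivity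
  have q2 : (0:ℝ) ≤ (K30 / 6 + ν * K22 / 4 + α * K32 / 6 + 1) * Δy ^ 2 := by positivity
  linarith [tri, hT1, hT2, hT3, hT4, hT5, q1, q2]
end
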